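/- arXiv:2502.10661 — 2 statements merged into one kernel-verified Lean document; each statement's English description precedes it below -/
import Mathlib

section
/- Fix p, q, r, y ∈ ℚ and let A ∈ ℚ[[x]] be the formal power series whose coefficient of x^n (n ≥ 1) is Σ_{π ∈ 𝓕_n} p^(asc(π)) · q^(des(π)) · r^(lev(π)) · y^(trun(π)−1), and whose constant coefficient is 0. Then (1 − (r + p·y)·x) · (1 − 2(p+r)·x + ((p+r)² − p·q)·x²) · A = x·(1 − (p+r)·x)² as formal power series in ℚ[[x]]. -/
open scoped BigOperators

/-- `w` is a Catalan word: it is nonempty, starts with `1`, and each subsequent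
letter lies between `1` and the previous letter plus one. -/
def IsCatalan (w : List ℕ) : Prop :=
  w ≠ [] ∧ w.getD 0 0 = 1 ∧
    ∀ i, i + 1 < w.length →
      1 ≤ w.getD (i + 1) 0 ∧ w.getD (i + 1) 0 ≤ w.getD i 0 + 1

/-- `i` is the starting index of a maximal weakly increasing run of `w`. -/
def RunStart (w : List ℕ) (i : ℕ) : Prop :=
  i < w.length ∧ (i = 0 ∨ w.getD i 0 < w.getD (i - 1) 0)

/-- `w` is flattened: the first letters of its increasing runs, read left to
right, form a weakly nondecreasing sequence. -/
def IsFlattened (w : List ℕ) : Prop :=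
  ∀ i j, RunStart w i → RunStart w j → i ≤ j → w.getD i 0 ≤ w.getD j 0

/-- The set of flattened Catalan words of length `n`. -/
def FlatCat (n : ℕ) : Set (List ℕ) :=
  {w | w.length = n ∧ IsCatalan w ∧ IsFlattened w}

/-- `i` is the starting index of an occurrence of the consecutive pattern `τ`
in the word `w`, i.e. the factor of `w` of length `|τ|` starting at `i` is
order-isomorphic to `τ`. -/
def OccAt (τ w : List ℕ) (i : ℕ) : Prop :=
  i + τ.length ≤ w.length ∧
    ∀ s < τ.length, ∀ t < τ.length,
      (w.getD (i + s) 0 < w.getD (i + t) 0 ↔ τ.getD s 0 < τ.getD t 0)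

/-- The number of occurrences of the consecutive pattern `τ` in `w`. -/
noncomputable def numOcc (τ w : List ℕ) : ℕ :=
  Set.ncard {i | OccAt τ w i}

/-- The number of distinct letters in the terminal (rightmost) increasing run
of `w`, i.e. in the longest weakly increasing suffix of `w`. -/
noncomputable def trun (w : List ℕ) : ℕ :=
  ((w.drop (sInf {i | List.Chain' (· ≤ ·) (w.drop i)})).toFinset).card

/-- The total number of occurrences of the consecutive pattern `τ` over all
flattened Catalan words of length `n`. -/
noncomputable def tot (n : ℕ) (τ : List ℕ) : ℕ :=
  ∑ᶠ w ∈ FlatCat n, numOcc τ w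

/-- The number of ascents of `w`. -/
noncomputable def asc (w : List ℕ) : ℕ :=
  Set.ncard {i | i + 1 < w.length ∧ w.getD i 0 < w.getD (i + 1) 0}

/-- The number of descents of `w`. -/
noncomputable def des (w : List ℕ) : ℕ :=
  Set.ncard {i | i + 1 < w.length ∧ w.getD (i + 1) 0 < w.getD i 0}

/-- The number of levels of `w`. -/
noncomputable def lev (w : List ℕ) : ℕ :=
  Set.ncard {i | i + 1 < w.length ∧ w.getD i 0 = w.getD (i + 1) 0}

namespace FCaux

def lastv (w : List ℕ) : ℕ := w.getD (w.length - 1) 0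
noncomputable def Jw (w : List ℕ) : ℕ := sInf {i | List.Chain' (· ≤ ·) (w.drop i)}
noncomputable def bv (w : List ℕ) : ℕ := w.getD (Jw w) 0

lemma chain_drop_iff (w : List ℕ) (i : ℕ) :
    List.Chain' (· ≤ ·) (w.drop i) ↔
      ∀ k, i ≤ k → k + 1 < w.length → w.getD k 0 ≤ w.getD (k + 1) 0 := by
  rw [List.Chain', List.isChain_iff_getElem]
  constructor
  · intro h k hik hk1
    have hlen : k - i + 1 < (w.drop i).length := by
      rw [List.length_drop]; omega
    have := h (k - i) hlen
    simp only [List.get_eq_getElem, List.getElem_drop] at this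
    have h1 : i + (k - i) = k := by omega
    have h2 : i + (k - i + 1) = k + 1 := by omega
    rw [List.getD_eq_getElem w 0 (by omega : k < w.length),
        List.getD_eq_getElem w 0 hk1]
    simpa [h1, h2] using this
  · intro h j hj
    simp only [List.get_eq_getElem, List.getElem_drop]
    have hjl : i + j + 1 < w.length := by
      rw [List.length_drop] at hj; omega
    have := h (i + j) (by omega) hjl
    rw [List.getD_eq_getElem w 0 (by omega : i + j < w.length),
        List.getD_eq_getElem w 0 hjl] at this
    simpa [Nat.add_assoc] using this

lemma getD_append_lt (w : List ℕ) (c : ℕ) {i : ℕ} (h : i < w.length) :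
    (w ++ [c]).getD i 0 = w.getD i 0 := List.getD_append _ _ _ _ h

lemma getD_append_self (w : List ℕ) (c : ℕ) :
    (w ++ [c]).getD w.length 0 = c := by
  rw [List.getD_append_right _ _ _ _ (le_refl _)]; simp

lemma lastv_append (w : List ℕ) (c : ℕ) : lastv (w ++ [c]) = c := by
  unfold lastv
  have : (w ++ [c]).length - 1 = w.length := by simp
  rw [this, getD_append_self]

end FCaux

namespace FCaux

lemma one_le_getD {w : List ℕ} (hc : IsCatalan w) {i : ℕ} (h : i < w.length) :
    1 ≤ w.getD i 0 := by
  cases i with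
  | zero => rw [hc.2.1]
  | succ k => exact (hc.2.2 k h).1

lemma Jw_mem (w : List ℕ) :
    ∀ k, Jw w ≤ k → k + 1 < w.length → w.getD k 0 ≤ w.getD (k + 1) 0 := by
  have hne : {i | List.Chain' (· ≤ ·) (w.drop i)}.Nonempty :=
    ⟨w.length, by rw [Set.mem_setOf_eq, chain_drop_iff]; intro k hk hk1; omega⟩
  have := Nat.sInf_mem hne
  rw [Set.mem_setOf_eq, chain_drop_iff] at this
  exact this

lemma Jw_le (w : List ℕ) : Jw w ≤ w.length - 1 := by
  apply Nat.sInf_le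
  rw [Set.mem_setOf_eq, chain_drop_iff]
  intro k hk hk1; omega

lemma mono_Jw {w : List ℕ} : ∀ k k', Jw w ≤ k → k ≤ k' → k' < w.length →
    w.getD k 0 ≤ w.getD k' 0 := by
  intro k k' hjk hkk'
  induction k' , hkk' using Nat.le_induction with
  | base => intro _; exact le_refl _
  | succ m hm ih => intro hlen; exact le_trans (ih (by omega)) (Jw_mem w m (by omega) (by omega))

lemma runStart_Jw {w : List ℕ} (hw : w ≠ []) : RunStart w (Jw w) := by
  have hlen : 0 < w.length := List.length_pos_iff.2 hw
  refine ⟨by have := Jw_le w; omega, ?_⟩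
  by_cases h0 : Jw w = 0
  · exact Or.inl h0
  · right
    have hlt : Jw w - 1 < Jw w := by omega
    have hnot := Nat.notMem_of_lt_sInf (s := {i | List.Chain' (· ≤ ·) (w.drop i)}) hlt
    rw [Set.mem_setOf_eq, chain_drop_iff] at hnot
    push_neg at hnot
    obtain ⟨k, hk1, hk2, hk3⟩ := hnot
    have hkeq : k = Jw w - 1 := by
      by_contra hne
      exact absurd (Jw_mem w k (by omega) hk2) (by omega)
    rw [hkeq] at hk3
    have : Jw w - 1 + 1 = Jw w := by omega
    rw [this] at hk3
    omega

lemma runStart_le_Jw {w : List ℕ} {i : ℕ} (h : RunStart w i) : i ≤ Jw w := by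
  by_contra hlt
  push_neg at hlt
  obtain ⟨hi, h0⟩ := h
  rcases h0 with h0 | h0
  · omega
  · have := Jw_mem w (i - 1) (by omega) (by omega)
    have : i - 1 + 1 = i := by omega
    simp_all
    omega

lemma bv_le_lastv {w : List ℕ} (hw : w ≠ []) : bv w ≤ lastv w := by
  have hlen : 0 < w.length := List.length_pos_iff.2 hw
  exact mono_Jw (Jw w) (w.length - 1) (le_refl _) (Jw_le w) (by omega)

lemma one_le_bv {w : List ℕ} (hc : IsCatalan w) (hf : IsFlattened w) : 1 ≤ bv w := by
  have hw : w ≠ [] := hc.1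
  have hlen : 0 < w.length := List.length_pos_iff.2 hw
  have h0 : RunStart w 0 := ⟨hlen, Or.inl rfl⟩
  have := hf 0 (Jw w) h0 (runStart_Jw hw) (Nat.zero_le _)
  rw [hc.2.1] at this
  exact this

lemma mem_drop_iff (w : List ℕ) (j t : ℕ) :
    t ∈ w.drop j ↔ ∃ k, j ≤ k ∧ k < w.length ∧ w.getD k 0 = t := by
  rw [List.mem_iff_getElem]
  constructor
  · rintro ⟨m, hm, rfl⟩
    have hm' : j + m < w.length := by rw [List.length_drop] at hm; omega
    exact ⟨j + m, by omega, hm', by rw [List.getD_eq_getElem w 0 hm', List.getElem_drop]⟩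
  · rintro ⟨k, hjk, hk, rfl⟩
    refine ⟨k - j, by rw [List.length_drop]; omega, ?_⟩
    rw [List.getElem_drop, List.getD_eq_getElem w 0 hk]
    simp only [show j + (k - j) = k from by omega]

lemma toFinset_drop_eq_Icc {w : List ℕ} (hc : IsCatalan w) :
    (w.drop (Jw w)).toFinset = Finset.Icc (bv w) (lastv w) := by
  have hw : w ≠ [] := hc.1
  have hlen : 0 < w.length := List.length_pos_iff.2 hw
  have hJ : Jw w ≤ w.length - 1 := Jw_le w
  ext t
  rw [List.mem_toFinset, mem_drop_iff, Finset.mem_Icc]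
  constructor
  · rintro ⟨k, hjk, hk, rfl⟩
    exact ⟨mono_Jw (Jw w) k (le_refl _) hjk hk,
      mono_Jw k (w.length - 1) hjk (by omega) (by omega)⟩
  · rintro ⟨hbt, htv⟩
    induction t , hbt using Nat.le_induction with
    | base => exact ⟨Jw w, le_refl _, by omega, rfl⟩
    | succ t ht ih =>
      obtain ⟨k, hjk, hk, hkt⟩ := ih (by omega)
      set Sset : Set ℕ := {k' | k ≤ k' ∧ k' < w.length ∧ t + 1 ≤ w.getD k' 0} with hS
      have hSne : Sset.Nonempty := by
        refine ⟨w.length - 1, ?_⟩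
        refine ⟨by omega, by omega, ?_⟩
        exact htv
      have hKmem := Nat.sInf_mem hSne
      set K := sInf Sset with hKdef
      obtain ⟨hkK, hKlen, hKval⟩ := hKmem
      have hKne : K ≠ k := by
        intro h; rw [h, hkt] at hKval; omega
      have hK1 : K - 1 ∉ Sset := Nat.notMem_of_lt_sInf (by omega)
      rw [Set.mem_setOf_eq] at hK1
      push_neg at hK1
      have hKm1 : w.getD (K - 1) 0 ≤ t := by
        have := hK1 (by omega) (by omega)
        omega
      have hcat := (hc.2.2 (K - 1) (by omega : K - 1 + 1 < w.length)).2
      have hKK : K - 1 + 1 = K := by omega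
      rw [hKK] at hcat
      refine ⟨K, by omega, hKlen, by omega⟩

lemma trun_eq {w : List ℕ} (hc : IsCatalan w) : trun w = lastv w - bv w + 1 := by
  have hw : w ≠ [] := hc.1
  rw [trun, ← Jw, toFinset_drop_eq_Icc hc, Nat.card_Icc]
  have := bv_le_lastv hw
  omega

end FCaux

namespace FCaux

lemma cat_append {w : List ℕ} (hw : w ≠ []) (c : ℕ) :
    IsCatalan (w ++ [c]) ↔ IsCatalan w ∧ 1 ≤ c ∧ c ≤ lastv w + 1 := by
  have hlen : 0 < w.length := List.length_pos_iff.2 hw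
  have hlen' : (w ++ [c]).length = w.length + 1 := by simp
  constructor
  · rintro ⟨-, h0, hstep⟩
    rw [getD_append_lt w c hlen] at h0
    have hlast := hstep (w.length - 1) (by omega)
    have he : w.length - 1 + 1 = w.length := by omega
    rw [he, getD_append_self, getD_append_lt w c (by omega)] at hlast
    refine ⟨⟨hw, h0, fun i hi => ?_⟩, hlast.1, hlast.2⟩
    have := hstep i (by omega)
    rwa [getD_append_lt w c (by omega), getD_append_lt w c (by omega)] at this
  · rintro ⟨⟨-, h0, hstep⟩, hc1, hc2⟩
    refine ⟨by simp, by rwa [getD_append_lt w c hlen], fun i hi => ?_⟩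
    rw [hlen'] at hi
    rcases Nat.lt_or_ge (i + 1) w.length with h | h
    · rw [getD_append_lt w c h, getD_append_lt w c (by omega)]
      exact hstep i h
    · have hieq : i + 1 = w.length := by omega
      have : i = w.length - 1 := by omega
      rw [hieq, getD_append_self, this, getD_append_lt w c (by omega)]
      exact ⟨hc1, hc2⟩

lemma runStart_append {w : List ℕ} (hw : w ≠ []) (c : ℕ) (i : ℕ) :
    RunStart (w ++ [c]) i ↔ RunStart w i ∨ (i = w.length ∧ c < lastv w) := by
  have hlen : 0 < w.length := List.length_pos_iff.2 hw
  have hlen' : (w ++ [c]).length = w.length + 1 := by simp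
  unfold RunStart
  rw [hlen']
  constructor
  · rintro ⟨hi, h0⟩
    rcases Nat.lt_or_ge i w.length with h | h
    · left
      refine ⟨h, ?_⟩
      rcases h0 with h0 | h0
      · exact Or.inl h0
      · right; rwa [getD_append_lt w c h, getD_append_lt w c (by omega)] at h0
    · have hieq : i = w.length := by omega
      right
      refine ⟨hieq, ?_⟩
      rcases h0 with h0 | h0
      · omega
      · rw [hieq, getD_append_self, getD_append_lt w c (by omega)] at h0
        exact h0
  · rintro (⟨hi, h0⟩ | ⟨hieq, hcv⟩)
    · refine ⟨by omega, ?_⟩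
      rcases h0 with h0 | h0
      · exact Or.inl h0
      · right; rwa [getD_append_lt w c hi, getD_append_lt w c (by omega)]
    · refine ⟨by omega, Or.inr ?_⟩
      rw [hieq, getD_append_self, getD_append_lt w c (by omega)]
      exact hcv

lemma flat_append {w : List ℕ} (hw : w ≠ []) (c : ℕ) :
    IsFlattened (w ++ [c]) ↔
      IsFlattened w ∧ (c < lastv w → ∀ i, RunStart w i → w.getD i 0 ≤ c) := by
  have hlen : 0 < w.length := List.length_pos_iff.2 hw
  constructor
  · intro hf
    constructor
    · intro i j hi hj hij
      have := hf i j ((runStart_append hw c i).2 (Or.inl hi))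
        ((runStart_append hw c j).2 (Or.inl hj)) hij
      rwa [getD_append_lt w c hi.1, getD_append_lt w c hj.1] at this
    · intro hcv i hi
      have := hf i w.length ((runStart_append hw c i).2 (Or.inl hi))
        ((runStart_append hw c w.length).2 (Or.inr ⟨rfl, hcv⟩)) (le_of_lt hi.1)
      rwa [getD_append_lt w c hi.1, getD_append_self] at this
  · rintro ⟨hf, hmax⟩ i j hi hj hij
    rw [runStart_append hw c] at hi hj
    rcases hi with hi | ⟨hieq, hcv⟩
    · rcases hj with hj | ⟨hjeq, hcv⟩
      · rw [getD_append_lt w c hi.1, getD_append_lt w c hj.1]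
        exact hf i j hi hj hij
      · rw [getD_append_lt w c hi.1, hjeq, getD_append_self]
        exact hmax hcv i hi
    · rcases hj with hj | ⟨hjeq, _⟩
      · have := hj.1; omega
      · rw [hieq, hjeq]

lemma maxstart {w : List ℕ} (hw : w ≠ []) (hf : IsFlattened w) (c : ℕ) :
    (∀ i, RunStart w i → w.getD i 0 ≤ c) ↔ bv w ≤ c := by
  constructor
  · intro h; exact h (Jw w) (runStart_Jw hw)
  · intro h i hi
    exact le_trans (hf i (Jw w) hi (runStart_Jw hw) (runStart_le_Jw hi)) h

lemma mem_append {w : List ℕ} {n : ℕ} (hwmem : w ∈ FlatCat n) (c : ℕ) :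
    (w ++ [c]) ∈ FlatCat (n + 1) ↔ bv w ≤ c ∧ c ≤ lastv w + 1 := by
  obtain ⟨hlen, hc, hf⟩ := hwmem
  have hw : w ≠ [] := hc.1
  constructor
  · rintro ⟨-, hcat, hflat⟩
    rw [cat_append hw c] at hcat
    rw [flat_append hw c] at hflat
    rcases Nat.lt_or_ge c (lastv w) with h | h
    · exact ⟨(maxstart hw hf c).1 (hflat.2 h), hcat.2.2⟩
    · exact ⟨le_trans (bv_le_lastv hw) h, hcat.2.2⟩
  · rintro ⟨h1, h2⟩
    refine ⟨by simp [hlen], (cat_append hw c).2 ⟨hc, le_trans (one_le_bv hc hf) h1, h2⟩, ?_⟩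
    rw [flat_append hw c]
    exact ⟨hf, fun _ => (maxstart hw hf c).2 h1⟩

end FCaux

namespace FCaux

lemma Jw_append_ge {w : List ℕ} (hw : w ≠ []) {c : ℕ} (hcv : lastv w ≤ c) :
    Jw (w ++ [c]) = Jw w := by
  have hlen : 0 < w.length := List.length_pos_iff.2 hw
  have hset : {i | List.Chain' (· ≤ ·) ((w ++ [c]).drop i)}
      = {i | List.Chain' (· ≤ ·) (w.drop i)} := by
    ext i
    simp only [Set.mem_setOf_eq, chain_drop_iff, List.length_append, List.length_singleton]
    constructor
    · intro h k hk hk1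
      have := h k hk (by omega)
      rwa [getD_append_lt w c (by omega), getD_append_lt w c hk1] at this
    · intro h k hk hk1
      rcases Nat.lt_or_ge (k + 1) w.length with h2 | h2
      · rw [getD_append_lt w c (by omega), getD_append_lt w c h2]
        exact h k hk h2
      · have hke : k + 1 = w.length := by omega
        have hke' : k = w.length - 1 := by omega
        rw [hke, getD_append_self, getD_append_lt w c (by omega), hke']
        exact hcv
  unfold Jw
  rw [hset]

lemma bv_append_ge {w : List ℕ} (hw : w ≠ []) {c : ℕ} (hcv : lastv w ≤ c) :
    bv (w ++ [c]) = bv w := by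
  have hlen : 0 < w.length := List.length_pos_iff.2 hw
  have hJ := Jw_le w
  unfold bv
  rw [Jw_append_ge hw hcv, getD_append_lt w c (by omega)]

lemma Jw_append_lt {w : List ℕ} (hw : w ≠ []) {c : ℕ} (hcv : c < lastv w) :
    Jw (w ++ [c]) = w.length := by
  have hlen : 0 < w.length := List.length_pos_iff.2 hw
  have hmem : w.length ∈ {i | List.Chain' (· ≤ ·) ((w ++ [c]).drop i)} := by
    rw [Set.mem_setOf_eq, chain_drop_iff]
    intro k hk hk1
    simp only [List.length_append, List.length_singleton] at hk1
    omega
  have hle : Jw (w ++ [c]) ≤ w.length := Nat.sInf_le hmem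
  rcases Nat.lt_or_ge (Jw (w ++ [c])) w.length with h | h
  · exfalso
    have hmem2 := Nat.sInf_mem (s := {i | List.Chain' (· ≤ ·) ((w ++ [c]).drop i)})
      ⟨w.length, hmem⟩
    rw [Set.mem_setOf_eq, chain_drop_iff] at hmem2
    have := hmem2 (w.length - 1) (by unfold Jw at h; omega)
      (by simp only [List.length_append, List.length_singleton]; omega)
    rw [getD_append_lt w c (by omega), show w.length - 1 + 1 = w.length from by omega,
      getD_append_self] at this
    unfold lastv at hcv; omega
  · omega

lemma bv_append_lt {w : List ℕ} (hw : w ≠ []) {c : ℕ} (hcv : c < lastv w) :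
    bv (w ++ [c]) = c := by
  unfold bv
  rw [Jw_append_lt hw hcv, getD_append_self]

end FCaux

namespace FCaux

lemma ncard_adj (P : ℕ → ℕ → Prop) {w : List ℕ} (hw : w ≠ []) (c : ℕ)
    [Decidable (P (lastv w) c)] :
    Set.ncard {i | i + 1 < (w ++ [c]).length ∧
        P ((w ++ [c]).getD i 0) ((w ++ [c]).getD (i + 1) 0)}
      = Set.ncard {i | i + 1 < w.length ∧ P (w.getD i 0) (w.getD (i + 1) 0)}
        + (if P (lastv w) c then 1 else 0) := by
  have hlen : 0 < w.length := List.length_pos_iff.2 hw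
  set S := {i | i + 1 < w.length ∧ P (w.getD i 0) (w.getD (i + 1) 0)} with hS
  have hfin : S.Finite :=
    Set.Finite.subset (Set.finite_Iio w.length) (fun i hi => Set.mem_Iio.2 (by have := hi.1; omega))
  have hmemS : ∀ i, i + 1 < w.length →
      (P ((w ++ [c]).getD i 0) ((w ++ [c]).getD (i + 1) 0) ↔ P (w.getD i 0) (w.getD (i + 1) 0)) := by
    intro i hi
    rw [getD_append_lt w c (by omega), getD_append_lt w c hi]
  by_cases hP : P (lastv w) c
  · rw [if_pos hP]
    have hSE : {i | i + 1 < (w ++ [c]).length ∧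
        P ((w ++ [c]).getD i 0) ((w ++ [c]).getD (i + 1) 0)} = insert (w.length - 1) S := by
      ext i
      simp only [Set.mem_setOf_eq, Set.mem_insert_iff, List.length_append, List.length_singleton, hS]
      constructor
      · rintro ⟨hi, hp⟩
        rcases Nat.lt_or_ge (i + 1) w.length with h | h
        · exact Or.inr ⟨h, (hmemS i h).1 hp⟩
        · left; omega
      · rintro (rfl | ⟨hi, hp⟩)
        · refine ⟨by omega, ?_⟩
          rw [getD_append_lt w c (by omega), show w.length - 1 + 1 = w.length from by omega,
            getD_append_self]
          exact hP
        · exact ⟨by omega, (hmemS i hi).2 hp⟩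
    rw [hSE, Set.ncard_insert_of_notMem (fun hmem => by rw [hS] at hmem; exact absurd hmem.1 (by omega)) hfin]
  · rw [if_neg hP, Nat.add_zero]
    have hSE : {i | i + 1 < (w ++ [c]).length ∧
        P ((w ++ [c]).getD i 0) ((w ++ [c]).getD (i + 1) 0)} = S := by
      ext i
      simp only [Set.mem_setOf_eq, List.length_append, List.length_singleton, hS]
      constructor
      · rintro ⟨hi, hp⟩
        rcases Nat.lt_or_ge (i + 1) w.length with h | h
        · exact ⟨h, (hmemS i h).1 hp⟩
        · exfalso
          apply hP
          rw [getD_append_lt w c (by omega : i < w.length), show i + 1 = w.length from by omega,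
            getD_append_self, show i = w.length - 1 from by omega] at hp
          exact hp
      · rintro ⟨hi, hp⟩
        exact ⟨by omega, (hmemS i hi).2 hp⟩
    rw [hSE]

lemma asc_append {w : List ℕ} (hw : w ≠ []) (c : ℕ) :
    asc (w ++ [c]) = asc w + (if lastv w < c then 1 else 0) :=
  ncard_adj (· < ·) hw c

lemma des_append {w : List ℕ} (hw : w ≠ []) (c : ℕ) :
    des (w ++ [c]) = des w + (if c < lastv w then 1 else 0) :=
  ncard_adj (fun a b => b < a) hw c

lemma lev_append {w : List ℕ} (hw : w ≠ []) (c : ℕ) :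
    lev (w ++ [c]) = lev w + (if lastv w = c then 1 else 0) :=
  ncard_adj (· = ·) hw c

lemma trun_append {w : List ℕ} {n : ℕ} (hw : w ∈ FlatCat n) {c : ℕ}
    (h1 : bv w ≤ c) (h2 : c ≤ lastv w + 1) :
    trun (w ++ [c]) - 1 = if c < lastv w then 0 else (trun w - 1) + (c - lastv w) := by
  obtain ⟨hlen, hc, hf⟩ := hw
  have hwne : w ≠ [] := hc.1
  have hu : (w ++ [c]) ∈ FlatCat (n + 1) := (mem_append ⟨hlen, hc, hf⟩ c).2 ⟨h1, h2⟩
  have htu := trun_eq hu.2.1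
  rw [lastv_append] at htu
  have htw := trun_eq hc
  have hbv := bv_le_lastv hwne
  by_cases hcv : c < lastv w
  · rw [if_pos hcv, htu, bv_append_lt hwne hcv]
    omega
  · rw [if_neg hcv, htu, bv_append_ge hwne (by omega), htw]
    omega

end FCaux

namespace FCaux

lemma flatcat_zero : FlatCat 0 = ∅ := by
  ext w
  constructor
  · rintro ⟨hlen, hc, -⟩
    exact absurd (List.length_eq_zero_iff.1 hlen) hc.1
  · intro h
    exact h.elim

lemma flatcat_one : FlatCat 1 = {[1]} := by
  ext w
  simp only [FlatCat, Set.mem_setOf_eq, Set.mem_singleton_iff]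
  constructor
  · rintro ⟨hlen, hc, -⟩
    obtain ⟨a, rfl⟩ := List.length_eq_one_iff.1 hlen
    have := hc.2.1
    simp only [List.getD] at this
    simp_all
  · rintro rfl
    refine ⟨rfl, ⟨by simp, rfl, fun i hi => by simp at hi⟩, fun i j hi hj hij => ?_⟩
    have hi1 := hi.1
    have hj1 := hj.1
    simp only [List.length_singleton] at hi1 hj1
    have : i = j := by omega
    rw [this]

lemma decomp {u : List ℕ} {n : ℕ} (hu : u ∈ FlatCat (n + 1)) (hn : 1 ≤ n) :
    u.dropLast ∈ FlatCat n ∧ u = u.dropLast ++ [lastv u] := by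
  obtain ⟨hlen, hc, hf⟩ := hu
  have hune : u ≠ [] := hc.1
  have hld : u.dropLast.length = n := by simp [List.length_dropLast, hlen]
  have hwne : u.dropLast ≠ [] := by
    intro h
    rw [h] at hld
    simp at hld
    omega
  have hul : 0 < u.length := by omega
  have h1 : u.getLast hune = lastv u := by
    rw [List.getLast_eq_getElem]
    unfold lastv
    rw [List.getD_eq_getElem u 0 (by omega)]
  have heq : u = u.dropLast ++ [lastv u] := by
    rw [← h1]
    exact (List.dropLast_concat_getLast hune).symm
  have hc' : IsCatalan u := hc
  rw [heq] at hc hf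
  rw [cat_append hwne] at hc
  rw [flat_append hwne] at hf
  exact ⟨⟨hld, hc.1, hf.1⟩, heq⟩

lemma flatcat_finite (n : ℕ) : (FlatCat n).Finite := by
  induction n with
  | zero => rw [flatcat_zero]; exact Set.finite_empty
  | succ n ih =>
    rcases Nat.eq_zero_or_pos n with rfl | hn
    · rw [flatcat_one]; exact Set.finite_singleton _
    · apply Set.Finite.subset
        (Set.Finite.biUnion ih (fun w _ => ((Set.finite_Iic (lastv w + 1)).image (fun c => w ++ [c]))))
      intro u hu
      obtain ⟨hd, heq⟩ := decomp hu hn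
      refine Set.mem_biUnion hd ?_
      refine ⟨lastv u, ?_, heq.symm⟩
      have := (mem_append hd (lastv u)).1 (heq ▸ hu)
      exact Set.mem_Iic.2 this.2

lemma sum_transfer {n : ℕ} (hn : 1 ≤ n) (Φ : List ℕ → ℚ) :
    ∑ u ∈ (flatcat_finite (n + 1)).toFinset, Φ u
      = ∑ w ∈ (flatcat_finite n).toFinset,
          ∑ c ∈ Finset.Icc (bv w) (lastv w + 1), Φ (w ++ [c]) := by
  rw [Finset.sum_sigma' ((flatcat_finite n).toFinset)
    (fun w => Finset.Icc (bv w) (lastv w + 1)) (fun w c => Φ (w ++ [c]))]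
  refine Finset.sum_nbij' (fun u => ⟨u.dropLast, lastv u⟩) (fun x => x.1 ++ [x.2])
    ?_ ?_ ?_ ?_ ?_
  · intro u hu
    rw [Set.Finite.mem_toFinset] at hu
    obtain ⟨hd, heq⟩ := decomp hu hn
    rw [Finset.mem_sigma, Set.Finite.mem_toFinset]
    have := (mem_append hd (lastv u)).1 (heq ▸ hu)
    exact ⟨hd, Finset.mem_Icc.2 this⟩
  · intro x hx
    rw [Finset.mem_sigma, Set.Finite.mem_toFinset, Finset.mem_Icc] at hx
    rw [Set.Finite.mem_toFinset]
    exact (mem_append hx.1 x.2).2 hx.2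
  · intro u hu
    rw [Set.Finite.mem_toFinset] at hu
    exact ((decomp hu hn).2).symm
  · intro x hx
    simp only [List.dropLast_concat, lastv_append]
  · intro u hu
    rw [Set.Finite.mem_toFinset] at hu
    exact congrArg Φ ((decomp hu hn).2)

end FCaux

namespace FCaux

noncomputable def base (p q r : ℚ) (w : List ℕ) : ℚ := p ^ asc w * q ^ des w * r ^ lev w
noncomputable def Wt (p q r y : ℚ) (w : List ℕ) : ℚ := base p q r w * y ^ (trun w - 1)
noncomputable def FS (p q r y : ℚ) (n : ℕ) : ℚ :=
  ∑ w ∈ (flatcat_finite n).toFinset, Wt p q r y w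
noncomputable def TS (p q r : ℚ) (n : ℕ) : ℚ :=
  ∑ w ∈ (flatcat_finite n).toFinset, base p q r w * ((trun w - 1 : ℕ) : ℚ)

lemma stats_desc {w : List ℕ} {n : ℕ} (hw : w ∈ FlatCat n) {c : ℕ}
    (h1 : bv w ≤ c) (h2 : c < lastv w) :
    asc (w ++ [c]) = asc w ∧ des (w ++ [c]) = des w + 1 ∧ lev (w ++ [c]) = lev w ∧
      trun (w ++ [c]) - 1 = 0 := by
  obtain ⟨hlen, hc, hf⟩ := hw
  have hwne : w ≠ [] := hc.1
  refine ⟨?_, ?_, ?_, ?_⟩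
  · rw [asc_append hwne, if_neg (by omega), Nat.add_zero]
  · rw [des_append hwne, if_pos h2]
  · rw [lev_append hwne, if_neg (by omega), Nat.add_zero]
  · rw [trun_append ⟨hlen, hc, hf⟩ h1 (by omega), if_pos h2]

lemma stats_lev {w : List ℕ} {n : ℕ} (hw : w ∈ FlatCat n) :
    asc (w ++ [lastv w]) = asc w ∧ des (w ++ [lastv w]) = des w ∧
      lev (w ++ [lastv w]) = lev w + 1 ∧ trun (w ++ [lastv w]) - 1 = trun w - 1 := by
  obtain ⟨hlen, hc, hf⟩ := hw
  have hwne : w ≠ [] := hc.1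
  refine ⟨?_, ?_, ?_, ?_⟩
  · rw [asc_append hwne, if_neg (by omega), Nat.add_zero]
  · rw [des_append hwne, if_neg (by omega), Nat.add_zero]
  · rw [lev_append hwne, if_pos rfl]
  · rw [trun_append ⟨hlen, hc, hf⟩ (bv_le_lastv hwne) (by omega), if_neg (by omega),
      Nat.sub_self, Nat.add_zero]

lemma stats_asc {w : List ℕ} {n : ℕ} (hw : w ∈ FlatCat n) :
    asc (w ++ [lastv w + 1]) = asc w + 1 ∧ des (w ++ [lastv w + 1]) = des w ∧
      lev (w ++ [lastv w + 1]) = lev w ∧ trun (w ++ [lastv w + 1]) - 1 = (trun w - 1) + 1 := by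
  obtain ⟨hlen, hc, hf⟩ := hw
  have hwne : w ≠ [] := hc.1
  refine ⟨?_, ?_, ?_, ?_⟩
  · rw [asc_append hwne, if_pos (by omega)]
  · rw [des_append hwne, if_neg (by omega), Nat.add_zero]
  · rw [lev_append hwne, if_neg (by omega), Nat.add_zero]
  · rw [trun_append ⟨hlen, hc, hf⟩ (le_trans (bv_le_lastv hwne) (by omega)) (by omega),
      if_neg (by omega), Nat.add_sub_cancel_left]

lemma inner_F (p q r y : ℚ) {w : List ℕ} {n : ℕ} (hw : w ∈ FlatCat n) :
    ∑ c ∈ Finset.Icc (bv w) (lastv w + 1), Wt p q r y (w ++ [c])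
      = q * (base p q r w * ((trun w - 1 : ℕ) : ℚ)) + (r + p * y) * Wt p q r y w := by
  obtain ⟨hlen, hc, hf⟩ := hw
  have hwne : w ≠ [] := hc.1
  have hb : bv w ≤ lastv w := bv_le_lastv hwne
  have hk : trun w - 1 = lastv w - bv w := by
    have := trun_eq hc
    omega
  rw [Finset.sum_Icc_succ_top (by omega : bv w ≤ lastv w + 1),
    ← Finset.Ico_add_one_right_eq_Icc, Finset.sum_Ico_succ_top (by omega : bv w ≤ lastv w)]
  have hdesc : ∀ c ∈ Finset.Ico (bv w) (lastv w), Wt p q r y (w ++ [c]) = base p q r w * q := by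
    intro c hcmem
    rw [Finset.mem_Ico] at hcmem
    obtain ⟨ha, hd, hl, ht⟩ := stats_desc ⟨hlen, hc, hf⟩ hcmem.1 hcmem.2
    rw [Wt, base, ha, hd, hl, ht, pow_succ, pow_zero, base]
    ring
  rw [Finset.sum_congr rfl hdesc, Finset.sum_const, Nat.card_Ico, nsmul_eq_mul]
  have hWl : Wt p q r y (w ++ [lastv w]) = r * Wt p q r y w := by
    obtain ⟨ha, hd, hl, ht⟩ := stats_lev ⟨hlen, hc, hf⟩
    rw [Wt, base, ha, hd, hl, ht, pow_succ, Wt, base]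
    ring
  have hWa : Wt p q r y (w ++ [lastv w + 1]) = p * y * Wt p q r y w := by
    obtain ⟨ha, hd, hl, ht⟩ := stats_asc ⟨hlen, hc, hf⟩
    rw [Wt, base, ha, hd, hl, ht, pow_succ, pow_succ, Wt, base]
    ring
  rw [hWl, hWa, hk]
  ring

lemma inner_T (p q r : ℚ) {w : List ℕ} {n : ℕ} (hw : w ∈ FlatCat n) :
    ∑ c ∈ Finset.Icc (bv w) (lastv w + 1),
        base p q r (w ++ [c]) * ((trun (w ++ [c]) - 1 : ℕ) : ℚ)
      = p * Wt p q r 1 w + (p + r) * (base p q r w * ((trun w - 1 : ℕ) : ℚ)) := by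
  obtain ⟨hlen, hc, hf⟩ := hw
  have hwne : w ≠ [] := hc.1
  have hb : bv w ≤ lastv w := bv_le_lastv hwne
  rw [Finset.sum_Icc_succ_top (by omega : bv w ≤ lastv w + 1),
    ← Finset.Ico_add_one_right_eq_Icc, Finset.sum_Ico_succ_top (by omega : bv w ≤ lastv w)]
  have hdesc : ∀ c ∈ Finset.Ico (bv w) (lastv w),
      base p q r (w ++ [c]) * ((trun (w ++ [c]) - 1 : ℕ) : ℚ) = 0 := by
    intro c hcmem
    rw [Finset.mem_Ico] at hcmem
    obtain ⟨-, -, -, ht⟩ := stats_desc ⟨hlen, hc, hf⟩ hcmem.1 hcmem.2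
    rw [ht]
    simp
  rw [Finset.sum_congr rfl hdesc, Finset.sum_const, smul_zero]
  have hWl : base p q r (w ++ [lastv w]) * ((trun (w ++ [lastv w]) - 1 : ℕ) : ℚ)
      = r * (base p q r w * ((trun w - 1 : ℕ) : ℚ)) := by
    obtain ⟨ha, hd, hl, ht⟩ := stats_lev ⟨hlen, hc, hf⟩
    rw [base, ha, hd, hl, ht, pow_succ, base]
    ring
  have hWa : base p q r (w ++ [lastv w + 1]) * ((trun (w ++ [lastv w + 1]) - 1 : ℕ) : ℚ)
      = p * (base p q r w * (((trun w - 1 : ℕ) : ℚ) + 1)) := by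
    obtain ⟨ha, hd, hl, ht⟩ := stats_asc ⟨hlen, hc, hf⟩
    rw [base, ha, hd, hl, ht, pow_succ, base, Nat.cast_add, Nat.cast_one]
    ring
  rw [hWl, hWa, Wt]
  ring

lemma FS_rec (p q r y : ℚ) {n : ℕ} (hn : 1 ≤ n) :
    FS p q r y (n + 1) = (r + p * y) * FS p q r y n + q * TS p q r n := by
  rw [FS, sum_transfer hn,
    Finset.sum_congr rfl (fun w hw => inner_F p q r y ((Set.Finite.mem_toFinset _).1 hw)),
    FS, TS, Finset.mul_sum, Finset.mul_sum, ← Finset.sum_add_distrib]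
  apply Finset.sum_congr rfl
  intro w hw
  ring

lemma TS_rec (p q r : ℚ) {n : ℕ} (hn : 1 ≤ n) :
    TS p q r (n + 1) = p * FS p q r 1 n + (p + r) * TS p q r n := by
  rw [TS, sum_transfer hn (fun u => base p q r u * ((trun u - 1 : ℕ) : ℚ)),
    Finset.sum_congr rfl (fun w hw => inner_T p q r ((Set.Finite.mem_toFinset _).1 hw)),
    FS, TS, Finset.mul_sum, Finset.mul_sum, ← Finset.sum_add_distrib]

end FCaux

namespace FCaux

lemma toFinset_one : (flatcat_finite 1).toFinset = {[1]} := by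
  ext w
  rw [Set.Finite.mem_toFinset, flatcat_one]
  simp

lemma asc_one : asc [1] = 0 := by
  have h : {i | i + 1 < ([1] : List ℕ).length ∧ ([1] : List ℕ).getD i 0 < ([1] : List ℕ).getD (i + 1) 0} = ∅ := by
    ext i
    simp only [List.length_singleton, Set.mem_setOf_eq, Set.mem_empty_iff_false, iff_false, not_and]
    omega
  rw [asc, h, Set.ncard_empty]

lemma des_one : des [1] = 0 := by
  have h : {i | i + 1 < ([1] : List ℕ).length ∧ ([1] : List ℕ).getD (i + 1) 0 < ([1] : List ℕ).getD i 0} = ∅ := by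
    ext i
    simp only [List.length_singleton, Set.mem_setOf_eq, Set.mem_empty_iff_false, iff_false, not_and]
    omega
  rw [des, h, Set.ncard_empty]

lemma lev_one : lev [1] = 0 := by
  have h : {i | i + 1 < ([1] : List ℕ).length ∧ ([1] : List ℕ).getD i 0 = ([1] : List ℕ).getD (i + 1) 0} = ∅ := by
    ext i
    simp only [List.length_singleton, Set.mem_setOf_eq, Set.mem_empty_iff_false, iff_false, not_and]
    omega
  rw [lev, h, Set.ncard_empty]

lemma trun_one : trun [1] = 1 := by
  have hc : IsCatalan [1] := ⟨by simp, rfl, fun i hi => by simp at hi⟩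
  rw [trun_eq hc]
  have hJ : Jw [1] = 0 := by
    have := Jw_le [1]
    simpa using this
  unfold lastv bv
  rw [hJ]
  simp

lemma FS_one (p q r y : ℚ) : FS p q r y 1 = 1 := by
  rw [FS, toFinset_one, Finset.sum_singleton, Wt, base, asc_one, des_one, lev_one, trun_one]
  norm_num

lemma TS_one (p q r : ℚ) : TS p q r 1 = 0 := by
  rw [TS, toFinset_one, Finset.sum_singleton, trun_one]
  norm_num

lemma TS_rec3 (p q r : ℚ) {n : ℕ} (hn : 1 ≤ n) :
    TS p q r (n + 2) = 2 * (p + r) * TS p q r (n + 1) - ((p + r) ^ 2 - p * q) * TS p q r n := by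
  have e1 := TS_rec p q r (show 1 ≤ n + 1 by omega)
  have e2 := TS_rec p q r hn
  have e3 := FS_rec p q r 1 hn
  linear_combination e1 + p * e3 - (p + r) * e2

end FCaux


open PowerSeries

/-- The generating function for flattened Catalan words jointly by length,
ascents, descents, levels and `trun − 1` satisfies
`(1 − (r + p·y)x)(1 − 2(p+r)x + ((p+r)² − pq)x²)·A = x(1 − (p+r)x)²`. -/
theorem genfun_asc_des_lev (p q r y : ℚ) (A : PowerSeries ℚ)
    (hA : ∀ n : ℕ, PowerSeries.coeff n A =
      if n = 0 then 0 else
        ∑ᶠ w ∈ FlatCat n, p ^ asc w * q ^ des w * r ^ lev w * y ^ (trun w - 1)) :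
    (1 - PowerSeries.C (r + p * y) * PowerSeries.X) *
      (1 - PowerSeries.C (2 * (p + r)) * PowerSeries.X +
        PowerSeries.C ((p + r) ^ 2 - p * q) * PowerSeries.X ^ 2) * A =
    PowerSeries.X * (1 - PowerSeries.C (p + r) * PowerSeries.X) ^ 2 := by
  classical
  have hA' : ∀ n : ℕ, PowerSeries.coeff n A =
      if n = 0 then 0 else FCaux.FS p q r y n := by
    intro n
    rw [hA n]
    congr 1
    rw [← Set.Finite.coe_toFinset (FCaux.flatcat_finite n), finsum_mem_coe_finset, FCaux.FS]
    exact Finset.sum_congr rfl (fun w _ => by rw [FCaux.Wt, FCaux.base])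
  have hL : (1 - C (r + p * y) * X) *
      (1 - C (2 * (p + r)) * X + C ((p + r) ^ 2 - p * q) * X ^ 2) * A
      = A - C (r + p * y) * (A * X ^ 1) - C (2 * (p + r)) * (A * X ^ 1)
        + C ((r + p * y) * (2 * (p + r))) * (A * X ^ 2)
        + C ((p + r) ^ 2 - p * q) * (A * X ^ 2)
        - C ((r + p * y) * ((p + r) ^ 2 - p * q)) * (A * X ^ 3) := by
    rw [show C ((r + p * y) * (2 * (p + r)))
        = C (r + p * y) * C (2 * (p + r)) from map_mul _ _ _,
      show C ((r + p * y) * ((p + r) ^ 2 - p * q))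
        = C (r + p * y) * C ((p + r) ^ 2 - p * q) from map_mul _ _ _]
    ring
  have hR : X * (1 - C (p + r) * X) ^ 2
      = X - C (2 * (p + r)) * X ^ 2 + C ((p + r) * (p + r)) * X ^ 3 := by
    rw [show C (2 * (p + r)) = 2 * C (p + r) from by rw [map_mul, map_ofNat],
      show C ((p + r) * (p + r)) = C (p + r) * C (p + r) from map_mul _ _ _]
    ring
  rw [hL, hR]
  set z1 : ℚ := r + p * y with hz1
  set z2 : ℚ := 2 * (p + r) with hz2
  set z3 : ℚ := (p + r) ^ 2 - p * q with hz3
  set z4 : ℚ := z1 * z2 with hz4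
  set z5 : ℚ := z1 * z3 with hz5
  set z6 : ℚ := (p + r) * (p + r) with hz6
  ext n
  simp only [map_sub, map_add, PowerSeries.coeff_C_mul, PowerSeries.coeff_mul_X_pow',
    PowerSeries.coeff_X, PowerSeries.coeff_X_pow, PowerSeries.coeff_C, hA']
  match n with
  | 0 => norm_num
  | 1 => norm_num [FCaux.FS_one]
  | 2 =>
    norm_num [FCaux.FS_one]
    have h2 : FCaux.FS p q r y 2 = r + p * y := by
      rw [FCaux.FS_rec p q r y (le_refl 1), FCaux.FS_one, FCaux.TS_one]
      ring
    linear_combination h2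
  | 3 =>
    norm_num [FCaux.FS_one]
    have h2 : FCaux.FS p q r y 2 = r + p * y := by
      rw [FCaux.FS_rec p q r y (le_refl 1), FCaux.FS_one, FCaux.TS_one]
      ring
    have hT2 : FCaux.TS p q r 2 = p := by
      rw [FCaux.TS_rec p q r (le_refl 1), FCaux.FS_one, FCaux.TS_one]
      ring
    have h3 : FCaux.FS p q r y 3 = (r + p * y) ^ 2 + q * p := by
      rw [FCaux.FS_rec p q r y (show 1 ≤ 2 by omega), h2, hT2]
      ring
    linear_combination h3 - (r + p * y + 2 * (p + r)) * h2
  | (m + 4) =>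
    simp only [if_pos (show (1:ℕ) ≤ m + 4 by omega), if_pos (show (2:ℕ) ≤ m + 4 by omega),
      if_pos (show (3:ℕ) ≤ m + 4 by omega),
      show m + 4 - 1 = m + 3 by omega, show m + 4 - 2 = m + 2 by omega,
      show m + 4 - 3 = m + 1 by omega,
      if_neg (show ¬(m + 4 = 0) by omega), if_neg (show ¬(m + 3 = 0) by omega),
      if_neg (show ¬(m + 2 = 0) by omega), if_neg (show ¬(m + 1 = 0) by omega),
      if_neg (show ¬(m + 4 = 1) by omega), if_neg (show ¬(m + 4 = 2) by omega),
      if_neg (show ¬(m + 4 = 3) by omega)]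
    have e1 := FCaux.FS_rec p q r y (show 1 ≤ m + 3 by omega)
    have e2 := FCaux.FS_rec p q r y (show 1 ≤ m + 2 by omega)
    have e3 := FCaux.FS_rec p q r y (show 1 ≤ m + 1 by omega)
    have e4 := FCaux.TS_rec3 p q r (show 1 ≤ m + 1 by omega)
    linear_combination e1 - (2 * (p + r)) * e2 + ((p + r) ^ 2 - p * q) * e3 + q * e4
end

section
/- Fix p, q, r, y ∈ ℚ and let B ∈ ℚ[[x]] be the formal power series whose coefficient of x^n (n ≥ 1) is Σ_{π ∈ 𝓕_n} p^(#122(π)) · q^(#211(π)) · r^(#111(π)) · y^(trun(π)−1), and whose constant coefficient is 0. Then (1 − (r+y)·x − (p−r)·x²·y) · ((1 − (1+r)·x − (p−r)·x²)² − x²·(1 + (p−r)·x)·(1 + (q−r)·x)) · B = x·(1 + (1−r)·x)·(1 − (1+r)·x − (p−r)·x²)² as formal power series in ℚ[[x]]. -/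
open scoped BigOperators

namespace FCAux
open List

lemma cat_pos {w : List ℕ} (hw : IsCatalan w) {i : ℕ} (hi : i < w.length) :
    1 ≤ w.getD i 0 := by
  cases i with
  | zero => rw [hw.2.1]
  | succ k => exact (hw.2.2 k hi).1

/-- index of start of last run -/
noncomputable def runIdx (w : List ℕ) : ℕ := sInf {i | List.Chain' (· ≤ ·) (w.drop i)}

lemma trun_def (w : List ℕ) : trun w = ((w.drop (runIdx w)).toFinset).card := rfl

lemma chain'_short {l : List ℕ} (h : l.length ≤ 1) : l.Chain' (· ≤ ·) := by
  match l, h with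
  | [], _ => exact List.isChain_nil
  | [a], _ => exact List.isChain_singleton a

lemma runSet_mem (w : List ℕ) : w.length - 1 ∈ {i | List.Chain' (· ≤ ·) (w.drop i)} := by
  refine chain'_short ?_
  simp only [List.length_drop]
  omega

lemma runIdx_le (w : List ℕ) : runIdx w ≤ w.length - 1 := Nat.sInf_le (runSet_mem w)

lemma runIdx_lt {w : List ℕ} (hw : w ≠ []) : runIdx w < w.length := by
  have := runIdx_le w
  have : 0 < w.length := List.length_pos_iff.2 hw
  omega

lemma runIdx_chain (w : List ℕ) : (w.drop (runIdx w)).Chain' (· ≤ ·) :=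
  Nat.sInf_mem ⟨w.length - 1, runSet_mem w⟩

/-- step monotone within last run -/
lemma run_step {w : List ℕ} {i : ℕ} (h1 : runIdx w ≤ i) (h2 : i + 1 < w.length) :
    w.getD i 0 ≤ w.getD (i + 1) 0 := by
  have hc := (List.isChain_iff_getElem).1 (runIdx_chain w)
  have hlen : (w.drop (runIdx w)).length = w.length - runIdx w := List.length_drop
  have hk : i - runIdx w + 1 < (w.drop (runIdx w)).length := by omega
  have h := hc _ hk
  simp only [List.get_eq_getElem, List.getElem_drop] at h
  rw [List.getD_eq_getElem w 0 (show i < w.length by omega), List.getD_eq_getElem w 0 h2]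
  have e1 : runIdx w + (i - runIdx w) = i := by omega
  have e2 : runIdx w + (i - runIdx w + 1) = i + 1 := by omega
  simp only [e1, e2] at h
  exact h

lemma run_mono {w : List ℕ} {i j : ℕ} (h1 : runIdx w ≤ i) (hij : i ≤ j)
    (h2 : j < w.length) : w.getD i 0 ≤ w.getD j 0 := by
  induction j with
  | zero => have : i = 0 := by omega
            simp [this]
  | succ k ih =>
    rcases Nat.lt_or_ge i (k+1) with h | h
    · exact le_trans (ih (by omega) (by omega)) (run_step (by omega) h2)
    · have : i = k + 1 := by omega
      simp [this]

lemma runIdx_runStart {w : List ℕ} (hw : w ≠ []) : RunStart w (runIdx w) := by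
  refine ⟨runIdx_lt hw, ?_⟩
  by_cases h0 : runIdx w = 0
  · exact Or.inl h0
  · right
    by_contra hlt
    push_neg at hlt
    -- hlt : w.getD (runIdx w) 0 ≥ ... i.e. getD (runIdx w - 1) ≤ getD (runIdx w)
    have hr1 : runIdx w - 1 < w.length := by have := runIdx_lt hw; omega
    have hri : runIdx w < w.length := runIdx_lt hw
    have hmem : runIdx w - 1 ∈ {i | List.Chain' (· ≤ ·) (w.drop i)} := by
      have hdrop : w.drop (runIdx w - 1) = w[runIdx w - 1] :: w.drop (runIdx w) := by
        rw [List.drop_eq_getElem_cons hr1,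
          show runIdx w - 1 + 1 = runIdx w from by omega]
      rw [Set.mem_setOf_eq, hdrop]
      unfold List.Chain'
      rw [List.isChain_cons]
      refine ⟨?_, runIdx_chain w⟩
      intro z hz
      rw [List.head?_drop, List.getElem?_eq_getElem hri] at hz
      obtain rfl : w[runIdx w] = z := by injection hz
      rw [List.getD_eq_getElem w 0 hri, List.getD_eq_getElem w 0 hr1] at hlt
      exact hlt
    have hle := Nat.sInf_le hmem
    have : runIdx w ≤ runIdx w - 1 := hle
    omega

lemma runStart_le_runIdx {w : List ℕ} {i : ℕ} (h : RunStart w i) : i ≤ runIdx w := by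
  by_contra hlt
  push_neg at hlt
  rcases h with ⟨hiw, h0 | hdec⟩
  · omega
  · have : w.getD (i-1) 0 ≤ w.getD i 0 := run_mono (by omega) (by omega) hiw
    omega



noncomputable section

def mlast (w : List ℕ) : ℕ := w.getD (w.length - 1) 0
def runLow (w : List ℕ) : ℕ := w.getD (runIdx w) 0

lemma runLow_le_mlast {w : List ℕ} (hw : w ≠ []) : runLow w ≤ mlast w := by
  have h1 : 0 < w.length := List.length_pos_iff.2 hw
  exact run_mono (le_refl _) (runIdx_le w) (by omega)

lemma runStart_le_runLow {w : List ℕ} (hf : IsFlattened w) (hw : w ≠ []) {i : ℕ}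
    (h : RunStart w i) : w.getD i 0 ≤ runLow w :=
  hf i (runIdx w) h (runIdx_runStart hw) (runStart_le_runIdx h)

lemma exists_run_value {w : List ℕ} (hcat : IsCatalan w) {j c : ℕ}
    (hj1 : runIdx w ≤ j) (hj2 : j < w.length) (hc1 : runLow w ≤ c) (hc2 : c ≤ w.getD j 0) :
    ∃ i, runIdx w ≤ i ∧ i ≤ j ∧ w.getD i 0 = c := by
  induction j, hj1 using Nat.le_induction with
  | base => exact ⟨runIdx w, le_refl _, le_refl _, by unfold runLow at hc1; omega⟩
  | succ k hk ih =>
    by_cases hck : c ≤ w.getD k 0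
    · obtain ⟨i, h1, h2, h3⟩ := ih (by omega) hck
      exact ⟨i, h1, by omega, h3⟩
    · push_neg at hck
      have := (hcat.2.2 k hj2).2
      exact ⟨k + 1, by omega, le_refl _, by omega⟩

lemma toFinset_lastRun {w : List ℕ} (hcat : IsCatalan w) (hw : w ≠ []) :
    (w.drop (runIdx w)).toFinset = Finset.Icc (runLow w) (mlast w) := by
  have hlen : 0 < w.length := List.length_pos_iff.2 hw
  have hri : runIdx w < w.length := runIdx_lt hw
  ext x
  rw [List.mem_toFinset, Finset.mem_Icc, List.mem_iff_getElem]
  constructor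
  · rintro ⟨k, hklen, rfl⟩
    have hdl : (w.drop (runIdx w)).length = w.length - runIdx w := List.length_drop
    rw [List.getElem_drop]
    have hik : runIdx w + k < w.length := by omega
    have h1 : runLow w ≤ w.getD (runIdx w + k) 0 := run_mono (le_refl _) (by omega) hik
    have h2 : w.getD (runIdx w + k) 0 ≤ w.getD (w.length - 1) 0 :=
      run_mono (by omega) (by omega) (by omega)
    rw [List.getD_eq_getElem w 0 hik] at h1 h2
    exact ⟨h1, h2⟩
  · rintro ⟨h1, h2⟩
    have h2' : x ≤ w.getD (w.length - 1) 0 := h2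
    obtain ⟨i, hi1, hi2, hi3⟩ := exists_run_value hcat (runIdx_le w) (by omega) h1 h2'
    refine ⟨i - runIdx w, ?_, ?_⟩
    · rw [List.length_drop]; omega
    · rw [List.getElem_drop]
      simp only [show runIdx w + (i - runIdx w) = i from by omega]
      rw [← List.getD_eq_getElem w 0 (show i < w.length by omega)]
      exact hi3

lemma trun_eq_card {w : List ℕ} (hcat : IsCatalan w) (hw : w ≠ []) :
    trun w = mlast w + 1 - runLow w := by
  rw [trun_def, toFinset_lastRun hcat hw, Nat.card_Icc]

lemma getLast?_drop_of_lt {w : List ℕ} {i : ℕ} (h : i < w.length) :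
    (w.drop i).getLast? = some (mlast w) := by
  rw [List.getLast?_eq_getElem?, List.length_drop]
  have hlt : w.length - i - 1 < (w.drop i).length := by rw [List.length_drop]; omega
  rw [List.getElem?_eq_getElem hlt, List.getElem_drop]
  simp only [show i + (w.length - i - 1) = w.length - 1 from by omega]
  rw [mlast, List.getD_eq_getElem w 0 (by omega)]

lemma drop_append_single {w : List ℕ} {a : ℕ} {i : ℕ} (h : i ≤ w.length) :
    (w ++ [a]).drop i = w.drop i ++ [a] := by
  rw [List.drop_append, show i - w.length = 0 from by omega]
  rfl

lemma chain_append_iff {w : List ℕ} {a : ℕ} (hw : w ≠ []) (ha : mlast w ≤ a) (i : ℕ) :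
    List.Chain' (· ≤ ·) ((w ++ [a]).drop i) ↔ List.Chain' (· ≤ ·) (w.drop i) := by
  have hlen : 0 < w.length := List.length_pos_iff.2 hw
  by_cases hi : i ≤ w.length
  · rw [drop_append_single hi]
    unfold List.Chain'
    rw [List.isChain_append]
    constructor
    · rintro ⟨h1, _, _⟩; exact h1
    · intro h1
      refine ⟨h1, List.isChain_singleton a, ?_⟩
      intro x hx y hy
      by_cases hiw : i < w.length
      · rw [getLast?_drop_of_lt hiw] at hx
        obtain rfl : mlast w = x := by injection hx
        simp only [List.head?_cons, Option.mem_def, Option.some.injEq] at hy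
        omega
      · have : w.length ≤ i := by omega
        rw [List.drop_eq_nil_of_le this] at hx
        simp at hx
  · push_neg at hi
    have h1 : (w ++ [a]).drop i = [] ∨ (w ++ [a]).drop i = [a] := by
      by_cases h2 : i = w.length + 1 - 1
      · right
        rw [List.drop_append, List.drop_eq_nil_of_le (by omega),
          show i - w.length = 0 from by omega]
        rfl
      · left
        apply List.drop_eq_nil_of_le
        simp only [List.length_append, List.length_singleton]
        omega
    have h2 : w.drop i = [] := List.drop_eq_nil_of_le (by omega)
    rw [h2]
    rcases h1 with h | h <;> rw [h] <;> simp [List.Chain', List.isChain_singleton, List.isChain_nil]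

lemma runIdx_append_ge {w : List ℕ} {a : ℕ} (hw : w ≠ []) (ha : mlast w ≤ a) :
    runIdx (w ++ [a]) = runIdx w := by
  unfold runIdx
  congr 1
  ext i
  exact chain_append_iff hw ha i

lemma runIdx_append_lt {w : List ℕ} {a : ℕ} (hw : w ≠ []) (ha : a < mlast w) :
    runIdx (w ++ [a]) = w.length := by
  have hlen : 0 < w.length := List.length_pos_iff.2 hw
  have hmem : w.length ∈ {i | List.Chain' (· ≤ ·) ((w ++ [a]).drop i)} := by
    rw [Set.mem_setOf_eq, drop_append_single (le_refl _), List.drop_eq_nil_of_le (le_refl _)]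
    exact List.isChain_singleton a
  refine le_antisymm (Nat.sInf_le hmem) ?_
  refine le_csInf ⟨_, hmem⟩ ?_
  intro b hb
  by_contra hblt
  push_neg at hblt
  rw [Set.mem_setOf_eq, drop_append_single (by omega)] at hb
  unfold List.Chain' at hb
  rw [List.isChain_append] at hb
  obtain ⟨_, _, h3⟩ := hb
  have := h3 (mlast w) (by rw [getLast?_drop_of_lt (by omega)]; rfl) a (by simp)
  omega

lemma trun_append_flat {w : List ℕ} (hcat : IsCatalan w) (hw : w ≠ []) :
    trun (w ++ [mlast w]) = trun w := by
  have hri : runIdx w < w.length := runIdx_lt hw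
  rw [trun_def, runIdx_append_ge hw (le_refl _), drop_append_single (by omega),
    List.toFinset_append, toFinset_lastRun hcat hw, trun_eq_card hcat hw]
  have : Finset.Icc (runLow w) (mlast w) ∪ [mlast w].toFinset = Finset.Icc (runLow w) (mlast w) := by
    apply Finset.union_eq_left.2
    intro x hx
    simp only [List.toFinset_cons, List.toFinset_nil, insert_empty_eq, Finset.mem_singleton] at hx
    subst hx
    rw [Finset.mem_Icc]
    exact ⟨runLow_le_mlast hw, le_refl _⟩
  rw [this, Nat.card_Icc]

lemma trun_append_up {w : List ℕ} (hcat : IsCatalan w) (hw : w ≠ []) :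
    trun (w ++ [mlast w + 1]) = trun w + 1 := by
  have hri : runIdx w < w.length := runIdx_lt hw
  have hlo := runLow_le_mlast hw
  rw [trun_def, runIdx_append_ge hw (by omega), drop_append_single (by omega),
    List.toFinset_append, toFinset_lastRun hcat hw, trun_eq_card hcat hw]
  have : Finset.Icc (runLow w) (mlast w) ∪ [mlast w + 1].toFinset
      = Finset.Icc (runLow w) (mlast w + 1) := by
    ext x
    simp only [Finset.mem_union, Finset.mem_Icc, List.toFinset_cons, List.toFinset_nil,
      insert_empty_eq, Finset.mem_singleton]
    omega
  rw [this, Nat.card_Icc]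
  omega

lemma trun_append_lt {w : List ℕ} {a : ℕ} (hw : w ≠ []) (ha : a < mlast w) :
    trun (w ++ [a]) = 1 := by
  rw [trun_def, runIdx_append_lt hw ha, drop_append_single (le_refl _),
    List.drop_eq_nil_of_le (le_refl _)]
  rfl

def lastStep (w : List ℕ) : ℕ :=
  if w.length ≤ 1 then 0
  else if w.getD (w.length - 2) 0 < w.getD (w.length - 1) 0 then 1
  else if w.getD (w.length - 1) 0 = w.getD (w.length - 2) 0 then 2
  else 3

lemma lastStep_le_three (w : List ℕ) : lastStep w ≤ 3 := by
  unfold lastStep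
  split_ifs <;> omega

lemma getD_append_sing_lt {w : List ℕ} {a : ℕ} {i : ℕ} (h : i < w.length) :
    (w ++ [a]).getD i 0 = w.getD i 0 := List.getD_append _ _ _ _ h

lemma getD_append_sing_last {w : List ℕ} {a : ℕ} :
    (w ++ [a]).getD w.length 0 = a := by
  rw [List.getD_append_right _ _ _ _ (le_refl _), Nat.sub_self]
  rfl

lemma mlast_append {w : List ℕ} {a : ℕ} : mlast (w ++ [a]) = a := by
  rw [mlast, List.length_append, List.length_singleton,
    show w.length + 1 - 1 = w.length from by omega, getD_append_sing_last]

lemma lastStep_append {w : List ℕ} {a : ℕ} (hw : w ≠ []) :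
    lastStep (w ++ [a]) =
      if mlast w < a then 1 else if a = mlast w then 2 else 3 := by
  have hlen : 0 < w.length := List.length_pos_iff.2 hw
  unfold lastStep
  rw [List.length_append, List.length_singleton]
  rw [if_neg (by omega)]
  rw [show w.length + 1 - 2 = w.length - 1 from by omega,
    show w.length + 1 - 1 = w.length from by omega,
    getD_append_sing_last, getD_append_sing_lt (show w.length - 1 < w.length from by omega)]
  rfl

end

lemma occAt_122 {w : List ℕ} {i : ℕ} :
    OccAt [1,2,2] w i ↔ i + 3 ≤ w.length ∧ w.getD i 0 < w.getD (i+1) 0 ∧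
      w.getD (i+1) 0 = w.getD (i+2) 0 := by
  unfold OccAt
  simp only [List.length_cons, List.length_nil]
  constructor
  · rintro ⟨hl, h⟩
    refine ⟨hl, ?_, ?_⟩
    · have := h 0 (by omega) 1 (by omega)
      simp only [List.getD_cons_succ, List.getD_cons_zero, Nat.add_zero] at this
      omega
    · have h12 := h 1 (by omega) 2 (by omega)
      have h21 := h 2 (by omega) 1 (by omega)
      simp only [List.getD_cons_succ, List.getD_cons_zero, Nat.add_zero] at h12 h21
      omega
  · rintro ⟨hl, h1, h2⟩
    refine ⟨hl, ?_⟩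
    intro s hs t ht
    interval_cases s <;> interval_cases t <;> simp only [List.getD_cons_succ, List.getD_cons_zero, Nat.add_zero] <;> omega

lemma occAt_211 {w : List ℕ} {i : ℕ} :
    OccAt [2,1,1] w i ↔ i + 3 ≤ w.length ∧ w.getD (i+1) 0 < w.getD i 0 ∧
      w.getD (i+1) 0 = w.getD (i+2) 0 := by
  unfold OccAt
  simp only [List.length_cons, List.length_nil]
  constructor
  · rintro ⟨hl, h⟩
    refine ⟨hl, ?_, ?_⟩
    · have := h 1 (by omega) 0 (by omega)
      simp only [List.getD_cons_succ, List.getD_cons_zero, Nat.add_zero] at this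
      omega
    · have h12 := h 1 (by omega) 2 (by omega)
      have h21 := h 2 (by omega) 1 (by omega)
      simp only [List.getD_cons_succ, List.getD_cons_zero, Nat.add_zero] at h12 h21
      omega
  · rintro ⟨hl, h1, h2⟩
    refine ⟨hl, ?_⟩
    intro s hs t ht
    interval_cases s <;> interval_cases t <;> simp only [List.getD_cons_succ, List.getD_cons_zero, Nat.add_zero] <;> omega

lemma occAt_111 {w : List ℕ} {i : ℕ} :
    OccAt [1,1,1] w i ↔ i + 3 ≤ w.length ∧ w.getD i 0 = w.getD (i+1) 0 ∧
      w.getD (i+1) 0 = w.getD (i+2) 0 := by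
  unfold OccAt
  simp only [List.length_cons, List.length_nil]
  constructor
  · rintro ⟨hl, h⟩
    refine ⟨hl, ?_, ?_⟩
    · have h01 := h 0 (by omega) 1 (by omega)
      have h10 := h 1 (by omega) 0 (by omega)
      simp only [List.getD_cons_succ, List.getD_cons_zero, Nat.add_zero] at h01 h10
      omega
    · have h12 := h 1 (by omega) 2 (by omega)
      have h21 := h 2 (by omega) 1 (by omega)
      simp only [List.getD_cons_succ, List.getD_cons_zero, Nat.add_zero] at h12 h21
      omega
  · rintro ⟨hl, h1, h2⟩
    refine ⟨hl, ?_⟩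
    intro s hs t ht
    interval_cases s <;> interval_cases t <;> simp only [List.getD_cons_succ, List.getD_cons_zero, Nat.add_zero] <;> omega

lemma numOcc_short {τ w : List ℕ} (h : w.length < τ.length) : numOcc τ w = 0 := by
  unfold numOcc
  convert Set.ncard_empty ℕ
  ext i
  simp only [Set.mem_setOf_eq, Set.mem_empty_iff_false, iff_false]
  intro hocc
  have := hocc.1
  omega

lemma occ_finite (τ w : List ℕ) (hτ : τ ≠ []) : {i | OccAt τ w i}.Finite := by
  apply Set.Finite.subset (Set.finite_Iio w.length)
  intro i hi
  have h1 := hi.1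
  have h2 : 0 < τ.length := List.length_pos_iff.2 hτ
  simp only [Set.mem_Iio]
  omega

lemma occ_restrict {τ w : List ℕ} {a i : ℕ} (h : i + τ.length ≤ w.length) :
    OccAt τ (w ++ [a]) i ↔ OccAt τ w i := by
  unfold OccAt
  rw [List.length_append, List.length_singleton]
  have hg : ∀ s < τ.length, (w ++ [a]).getD (i + s) 0 = w.getD (i + s) 0 := by
    intro s hs
    exact getD_append_sing_lt (by omega)
  constructor
  · rintro ⟨_, hrel⟩
    refine ⟨h, ?_⟩
    intro s hs t ht
    rw [← hg s hs, ← hg t ht]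
    exact hrel s hs t ht
  · rintro ⟨_, hrel⟩
    refine ⟨by omega, ?_⟩
    intro s hs t ht
    rw [hg s hs, hg t ht]
    exact hrel s hs t ht

lemma numOcc_append {τ w : List ℕ} {a : ℕ} (hτ : τ.length = 3) (hw : 2 ≤ w.length)
    [Decidable (OccAt τ (w ++ [a]) (w.length - 2))] :
    numOcc τ (w ++ [a]) = numOcc τ w +
      (if OccAt τ (w ++ [a]) (w.length - 2) then 1 else 0) := by
  have hτne : τ ≠ [] := by intro h; rw [h] at hτ; simp at hτ
  have hset : {i | OccAt τ (w ++ [a]) i} =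
      {i | OccAt τ w i} ∪ (if OccAt τ (w ++ [a]) (w.length - 2) then {w.length - 2} else ∅) := by
    ext i
    simp only [Set.mem_setOf_eq, Set.mem_union]
    by_cases hi : i + 3 ≤ w.length
    · rw [occ_restrict (by omega)]
      have : i ∉ (if OccAt τ (w ++ [a]) (w.length - 2) then ({w.length - 2} : Set ℕ) else ∅) := by
        split_ifs
        · simp only [Set.mem_singleton_iff]; omega
        · simp
      constructor
      · intro h; exact Or.inl h
      · rintro (h | h)
        · exact h
        · exfalso; split_ifs at h
          · simp only [Set.mem_singleton_iff] at h; omega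
          · simp at h
    · by_cases hieq : i = w.length - 2
      · subst hieq
        constructor
        · intro h
          right
          rw [if_pos h]
          simp
        · rintro (h | h)
          · exfalso; have := h.1; omega
          · split_ifs at h with hcond
            · exact hcond
            · simp at h
      · constructor
        · intro h
          exfalso
          have := h.1
          rw [List.length_append, List.length_singleton] at this
          omega
        · rintro (h | h)
          · exfalso; have := h.1; omega
          · exfalso; split_ifs at h
            · simp only [Set.mem_singleton_iff] at h; omega
            · simp at h
  unfold numOcc
  rw [hset, Set.ncard_union_eq ?disj (occ_finite τ w hτne) ?fin]
  case disj =>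
    rw [Set.disjoint_left]
    intro i hi hi2
    have := hi.1
    split_ifs at hi2
    · simp only [Set.mem_singleton_iff] at hi2; omega
    · simp at hi2
  case fin =>
    split_ifs
    · exact Set.finite_singleton _
    · exact Set.finite_empty
  congr 1
  split_ifs
  · exact Set.ncard_singleton _
  · exact Set.ncard_empty _

lemma ind_122 {w : List ℕ} {a : ℕ} (hw2 : 2 ≤ w.length) :
    OccAt [1,2,2] (w ++ [a]) (w.length - 2) ↔
      (w.getD (w.length - 2) 0 < mlast w ∧ mlast w = a) := by
  have e1 : (w ++ [a]).getD (w.length - 2) 0 = w.getD (w.length - 2) 0 :=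
    getD_append_sing_lt (by omega)
  have e2 : (w ++ [a]).getD (w.length - 2 + 1) 0 = mlast w := by
    rw [show w.length - 2 + 1 = w.length - 1 from by omega,
      getD_append_sing_lt (by omega)]
    rfl
  have e3 : (w ++ [a]).getD (w.length - 2 + 2) 0 = a := by
    rw [show w.length - 2 + 2 = w.length from by omega, getD_append_sing_last]
  rw [occAt_122, e1, e2, e3, List.length_append, List.length_singleton]
  constructor
  · rintro ⟨_, h1, h2⟩; exact ⟨h1, h2⟩
  · rintro ⟨h1, h2⟩; exact ⟨by omega, h1, h2⟩

lemma ind_211 {w : List ℕ} {a : ℕ} (hw2 : 2 ≤ w.length) :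
    OccAt [2,1,1] (w ++ [a]) (w.length - 2) ↔
      (mlast w < w.getD (w.length - 2) 0 ∧ mlast w = a) := by
  have e1 : (w ++ [a]).getD (w.length - 2) 0 = w.getD (w.length - 2) 0 :=
    getD_append_sing_lt (by omega)
  have e2 : (w ++ [a]).getD (w.length - 2 + 1) 0 = mlast w := by
    rw [show w.length - 2 + 1 = w.length - 1 from by omega,
      getD_append_sing_lt (by omega)]
    rfl
  have e3 : (w ++ [a]).getD (w.length - 2 + 2) 0 = a := by
    rw [show w.length - 2 + 2 = w.length from by omega, getD_append_sing_last]
  rw [occAt_211, e1, e2, e3, List.length_append, List.length_singleton]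
  constructor
  · rintro ⟨_, h1, h2⟩; exact ⟨h1, h2⟩
  · rintro ⟨h1, h2⟩; exact ⟨by omega, h1, h2⟩

lemma ind_111 {w : List ℕ} {a : ℕ} (hw2 : 2 ≤ w.length) :
    OccAt [1,1,1] (w ++ [a]) (w.length - 2) ↔
      (w.getD (w.length - 2) 0 = mlast w ∧ mlast w = a) := by
  have e1 : (w ++ [a]).getD (w.length - 2) 0 = w.getD (w.length - 2) 0 :=
    getD_append_sing_lt (by omega)
  have e2 : (w ++ [a]).getD (w.length - 2 + 1) 0 = mlast w := by
    rw [show w.length - 2 + 1 = w.length - 1 from by omega,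
      getD_append_sing_lt (by omega)]
    rfl
  have e3 : (w ++ [a]).getD (w.length - 2 + 2) 0 = a := by
    rw [show w.length - 2 + 2 = w.length from by omega, getD_append_sing_last]
  rw [occAt_111, e1, e2, e3, List.length_append, List.length_singleton]
  constructor
  · rintro ⟨_, h1, h2⟩; exact ⟨h1, h2⟩
  · rintro ⟨h1, h2⟩; exact ⟨by omega, h1, h2⟩

noncomputable def wt (p q r : ℚ) (w : List ℕ) : ℚ :=
  p ^ numOcc [1,2,2] w * q ^ numOcc [2,1,1] w * r ^ numOcc [1,1,1] w

def cfac (p q r : ℚ) (s : ℕ) : ℚ :=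
  if s = 0 then 1 else if s = 1 then p else if s = 2 then r else q

lemma wt_short {p q r : ℚ} {w : List ℕ} (h : w.length < 3) : wt p q r w = 1 := by
  unfold wt
  rw [numOcc_short (by simpa using h), numOcc_short (by simpa using h),
    numOcc_short (by simpa using h)]
  norm_num

lemma wt_append_up {p q r : ℚ} {w : List ℕ} (hw : w ≠ []) :
    wt p q r (w ++ [mlast w + 1]) = wt p q r w := by
  classical
  have hlen : 0 < w.length := List.length_pos_iff.2 hw
  by_cases hw2 : 2 ≤ w.length
  · unfold wt
    rw [numOcc_append (τ:=[1,2,2]) rfl hw2, numOcc_append (τ:=[2,1,1]) rfl hw2,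
      numOcc_append (τ:=[1,1,1]) rfl hw2,
      if_neg (fun hx => by have := (ind_122 hw2).1 hx; omega),
      if_neg (fun hx => by have := (ind_211 hw2).1 hx; omega),
      if_neg (fun hx => by have := (ind_111 hw2).1 hx; omega)]
    norm_num
  · rw [wt_short (by simp; omega), wt_short (by omega)]

lemma wt_append_lt {p q r : ℚ} {w : List ℕ} {a : ℕ} (hw : w ≠ []) (ha : a < mlast w) :
    wt p q r (w ++ [a]) = wt p q r w := by
  classical
  have hlen : 0 < w.length := List.length_pos_iff.2 hw
  by_cases hw2 : 2 ≤ w.length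
  · unfold wt
    rw [numOcc_append (τ:=[1,2,2]) rfl hw2, numOcc_append (τ:=[2,1,1]) rfl hw2,
      numOcc_append (τ:=[1,1,1]) rfl hw2,
      if_neg (fun hx => by have := (ind_122 hw2).1 hx; omega),
      if_neg (fun hx => by have := (ind_211 hw2).1 hx; omega),
      if_neg (fun hx => by have := (ind_111 hw2).1 hx; omega)]
    norm_num
  · rw [wt_short (by simp; omega), wt_short (by omega)]

lemma wt_append_flat {p q r : ℚ} {w : List ℕ} (hw : w ≠ []) :
    wt p q r (w ++ [mlast w]) = cfac p q r (lastStep w) * wt p q r w := by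
  classical
  have hlen : 0 < w.length := List.length_pos_iff.2 hw
  by_cases hw2 : 2 ≤ w.length
  · have hls : lastStep w = if w.getD (w.length - 2) 0 < w.getD (w.length - 1) 0 then 1
        else if w.getD (w.length - 1) 0 = w.getD (w.length - 2) 0 then 2 else 3 := by
      unfold lastStep
      rw [if_neg (by omega)]
    unfold wt
    rw [numOcc_append (τ:=[1,2,2]) rfl hw2, numOcc_append (τ:=[2,1,1]) rfl hw2,
      numOcc_append (τ:=[1,1,1]) rfl hw2]
    have hmv : w.getD (w.length - 1) 0 = mlast w := rfl
    rw [hmv] at hls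
    have hb : w.getD (w.length - 2) 0 < mlast w ∨ w.getD (w.length - 2) 0 = mlast w ∨
        mlast w < w.getD (w.length - 2) 0 := by omega
    rcases hb with h | h | h
    · rw [if_pos ((ind_122 hw2).2 ⟨h, rfl⟩),
        if_neg (fun hx => by have := (ind_211 hw2).1 hx; omega),
        if_neg (fun hx => by have := (ind_111 hw2).1 hx; omega),
        hls, if_pos h]
      unfold cfac
      norm_num [pow_succ]
      ring
    · rw [if_neg (fun hx => by have := (ind_122 hw2).1 hx; omega),
        if_neg (fun hx => by have := (ind_211 hw2).1 hx; omega),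
        if_pos ((ind_111 hw2).2 ⟨h, rfl⟩),
        hls, if_neg (by omega), if_pos (by omega)]
      unfold cfac
      norm_num [pow_succ]
      ring
    · rw [if_neg (fun hx => by have := (ind_122 hw2).1 hx; omega),
        if_pos ((ind_211 hw2).2 ⟨h, rfl⟩),
        if_neg (fun hx => by have := (ind_111 hw2).1 hx; omega),
        hls, if_neg (by omega), if_neg (by omega)]
      unfold cfac
      norm_num [pow_succ]
      ring
  · have h1 : w.length = 1 := by omega
    have hls : lastStep w = 0 := by unfold lastStep; rw [if_pos (by omega)]
    rw [wt_short (by simp; omega), wt_short (by omega), hls]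
    unfold cfac
    norm_num

lemma runstart_append_lt {w : List ℕ} {a i : ℕ} (hi : i < w.length) :
    RunStart (w ++ [a]) i ↔ RunStart w i := by
  unfold RunStart
  rw [List.length_append, List.length_singleton,
    getD_append_sing_lt hi, getD_append_sing_lt (show i - 1 < w.length by omega)]
  constructor
  · rintro ⟨_, h⟩; exact ⟨hi, h⟩
  · rintro ⟨_, h⟩; exact ⟨by omega, h⟩

lemma runstart_append_top {w : List ℕ} {a : ℕ} (hw : w ≠ []) :
    RunStart (w ++ [a]) w.length ↔ a < mlast w := by
  have hlen : 0 < w.length := List.length_pos_iff.2 hw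
  unfold RunStart
  rw [List.length_append, List.length_singleton, getD_append_sing_last,
    getD_append_sing_lt (show w.length - 1 < w.length by omega)]
  unfold mlast
  constructor
  · rintro ⟨_, h | h⟩
    · omega
    · exact h
  · intro h
    exact ⟨by omega, Or.inr h⟩

lemma mem_flatcat_append {n : ℕ} (hn : 1 ≤ n) {w : List ℕ} (hw : w ∈ FlatCat n) (a : ℕ) :
    (w ++ [a]) ∈ FlatCat (n + 1) ↔ (runLow w ≤ a ∧ a ≤ mlast w + 1) := by
  obtain ⟨hlen, hcat, hflat⟩ := hw
  have hwne : w ≠ [] := by intro h; rw [h] at hlen; simp at hlen; omega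
  have hlpos : 0 < w.length := List.length_pos_iff.2 hwne
  have hri : runIdx w < w.length := runIdx_lt hwne
  constructor
  · rintro ⟨hlen', hcat', hflat'⟩
    have hstep := hcat'.2.2 (w.length - 1) (by
      rw [List.length_append, List.length_singleton]; omega)
    rw [show w.length - 1 + 1 = w.length from by omega, getD_append_sing_last,
      getD_append_sing_lt (show w.length - 1 < w.length by omega)] at hstep
    have ha2 : a ≤ mlast w + 1 := hstep.2
    refine ⟨?_, ha2⟩
    by_cases hge : mlast w ≤ a
    · exact le_trans (runLow_le_mlast hwne) hge
    · push_neg at hge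
      have hrs' : RunStart (w ++ [a]) w.length := (runstart_append_top hwne).2 hge
      have hrsr : RunStart (w ++ [a]) (runIdx w) :=
        (runstart_append_lt hri).2 (runIdx_runStart hwne)
      have := hflat' (runIdx w) w.length hrsr hrs' (by omega)
      rw [getD_append_sing_lt hri, getD_append_sing_last] at this
      exact this
  · rintro ⟨ha1, ha2⟩
    have hrl1 : 1 ≤ runLow w := cat_pos hcat hri
    refine ⟨by simp [hlen], ⟨by simp, ?_, ?_⟩, ?_⟩
    · rw [getD_append_sing_lt hlpos]
      exact hcat.2.1
    · intro i hi
      rw [List.length_append, List.length_singleton] at hi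
      by_cases hilt : i + 1 < w.length
      · rw [getD_append_sing_lt (by omega), getD_append_sing_lt (by omega)]
        exact hcat.2.2 i hilt
      · have hieq : i + 1 = w.length := by omega
        rw [hieq, getD_append_sing_last, getD_append_sing_lt (by omega)]
        have hm2 : w.getD (w.length - 1) 0 = mlast w := rfl
        rw [show w.length - 1 = i from by omega] at hm2
        rw [hm2]
        omega
    · intro i j hi hj hij
      have hjlen : j < w.length + 1 := by
        have := hj.1
        rw [List.length_append, List.length_singleton] at this
        omega
      by_cases hjl : j < w.length
      · have hil : i < w.length := by omega
        rw [getD_append_sing_lt hil, getD_append_sing_lt hjl]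
        exact hflat i j ((runstart_append_lt hil).1 hi) ((runstart_append_lt hjl).1 hj) hij
      · have hjeq : j = w.length := by omega
        subst hjeq
        rw [getD_append_sing_last]
        by_cases hieq : i = w.length
        · subst hieq
          rw [getD_append_sing_last]
        · have hil : i < w.length := by omega
          rw [getD_append_sing_lt hil]
          exact le_trans (runStart_le_runLow hflat hwne ((runstart_append_lt hil).1 hi)) ha1

lemma flatcat_dropLast {n : ℕ} (hn : 1 ≤ n) {w : List ℕ} (hlen : w.length = n) {a : ℕ}
    (h : (w ++ [a]) ∈ FlatCat (n + 1)) : w ∈ FlatCat n := by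
  obtain ⟨hlen', hcat', hflat'⟩ := h
  have hwne : w ≠ [] := by intro hh; rw [hh] at hlen; simp at hlen; omega
  have hlpos : 0 < w.length := List.length_pos_iff.2 hwne
  refine ⟨hlen, ⟨hwne, ?_, ?_⟩, ?_⟩
  · have := hcat'.2.1
    rw [getD_append_sing_lt hlpos] at this
    exact this
  · intro i hi
    have := hcat'.2.2 i (by rw [List.length_append, List.length_singleton]; omega)
    rw [getD_append_sing_lt (by omega : i + 1 < w.length),
      getD_append_sing_lt (by omega : i < w.length)] at this
    exact this
  · intro i j hi hj hij
    have hjl : j < w.length := hj.1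
    have hil : i < w.length := by omega
    have := hflat' i j ((runstart_append_lt hil).2 hi) ((runstart_append_lt hjl).2 hj) hij
    rw [getD_append_sing_lt hil, getD_append_sing_lt hjl] at this
    exact this

lemma cat_le {w : List ℕ} (hcat : IsCatalan w) : ∀ i < w.length, w.getD i 0 ≤ i + 1 := by
  intro i
  induction i with
  | zero => intro _; rw [hcat.2.1]
  | succ k ih =>
    intro hk
    have h1 := (hcat.2.2 k hk).2
    have h2 := ih (by omega)
    omega

lemma flatcat_finite (n : ℕ) : (FlatCat n).Finite := by
  rw [← Set.finite_coe_iff]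
  apply Finite.of_injective (fun (w : FlatCat n) => (fun i : Fin n => (⟨w.1.getD i 0,
    by
      have hlen := w.2.1
      have := cat_le w.2.2.1 i (by rw [hlen]; exact i.2)
      have := i.2
      omega⟩ : Fin (n + 1))))
  intro w₁ w₂ hf
  apply Subtype.ext
  apply List.ext_getElem (by rw [w₁.2.1, w₂.2.1])
  intro i h1 h2
  have hi : i < n := by rw [← w₁.2.1]; exact h1
  have := congrFun hf ⟨i, hi⟩
  simp only [Fin.mk.injEq] at this
  rw [← List.getD_eq_getElem w₁.1 0 h1, ← List.getD_eq_getElem w₂.1 0 h2]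
  exact this

noncomputable def FCfin (n : ℕ) : Finset (List ℕ) := (flatcat_finite n).toFinset

lemma mem_FCfin {n : ℕ} {w : List ℕ} : w ∈ FCfin n ↔ w ∈ FlatCat n :=
  Set.Finite.mem_toFinset _

lemma FCfin_zero : FCfin 0 = ∅ := by
  ext w
  rw [mem_FCfin]
  simp only [Finset.notMem_empty, iff_false]
  rintro ⟨hlen, hcat, _⟩
  exact hcat.1 (List.length_eq_zero_iff.1 hlen)

lemma FCfin_one : FCfin 1 = {[1]} := by
  ext w
  rw [mem_FCfin, Finset.mem_singleton]
  constructor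
  · rintro ⟨hlen, hcat, _⟩
    obtain ⟨x, rfl⟩ := List.length_eq_one_iff.1 hlen
    have := hcat.2.1
    simp only [List.getD_cons_zero] at this
    rw [this]
  · rintro rfl
    refine ⟨rfl, ⟨by simp, rfl, by intro i hi; simp at hi⟩, ?_⟩
    intro i j hi hj hij
    have h1 := hi.1
    have h2 := hj.1
    simp only [List.length_singleton] at h1 h2
    have hi0 : i = 0 := by omega
    have hj0 : j = 0 := by omega
    subst hi0; subst hj0
    exact le_refl _

lemma FCfin_succ {n : ℕ} (hn : 1 ≤ n) :
    FCfin (n + 1) = (FCfin n).biUnion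
      (fun w => (Finset.Icc (runLow w) (mlast w + 1)).image (fun a => w ++ [a])) := by
  ext w'
  rw [mem_FCfin, Finset.mem_biUnion]
  constructor
  · intro h
    have hne : w' ≠ [] := h.2.1.1
    obtain ⟨w, a, rfl⟩ : ∃ w a, w' = w ++ [a] := ⟨w'.dropLast, w'.getLast hne,
      (List.dropLast_append_getLast hne).symm⟩
    have hwlen : w.length = n := by
      have := h.1
      rw [List.length_append, List.length_singleton] at this
      omega
    have hw : w ∈ FlatCat n := flatcat_dropLast hn hwlen h
    refine ⟨w, mem_FCfin.2 hw, ?_⟩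
    rw [Finset.mem_image]
    obtain ⟨h1, h2⟩ := (mem_flatcat_append hn hw a).1 h
    exact ⟨a, Finset.mem_Icc.2 ⟨h1, h2⟩, rfl⟩
  · rintro ⟨w, hw, hm⟩
    rw [Finset.mem_image] at hm
    obtain ⟨a, ha, rfl⟩ := hm
    rw [Finset.mem_Icc] at ha
    exact (mem_flatcat_append hn (mem_FCfin.1 hw) a).2 ha

lemma sum_FCfin_succ {n : ℕ} (hn : 1 ≤ n) (g : List ℕ → ℚ) :
    ∑ w' ∈ FCfin (n + 1), g w' =
      ∑ w ∈ FCfin n, ∑ a ∈ Finset.Icc (runLow w) (mlast w + 1), g (w ++ [a]) := by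
  rw [FCfin_succ hn, Finset.sum_biUnion]
  · apply Finset.sum_congr rfl
    intro w _
    rw [Finset.sum_image]
    intro a _ b _ hab
    have := List.append_cancel_left hab
    simpa using this
  · intro w₁ h₁ w₂ h₂ hne
    simp only [Finset.mem_coe, mem_FCfin] at h₁ h₂
    simp only [Function.onFun]
    rw [Finset.disjoint_left]
    intro x hx1 hx2
    rw [Finset.mem_image] at hx1 hx2
    obtain ⟨a₁, _, rfl⟩ := hx1
    obtain ⟨a₂, _, heq⟩ := hx2
    apply hne
    have := congrArg List.dropLast heq
    rw [List.dropLast_concat, List.dropLast_concat] at this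
    exact this.symm

lemma sum_Icc_split {lo m : ℕ} (hlo : lo ≤ m) (hm : 1 ≤ m) (f : ℕ → ℚ) :
    ∑ a ∈ Finset.Icc lo (m + 1), f a =
      (∑ a ∈ Finset.Icc lo (m - 1), f a) + f m + f (m + 1) := by
  rw [Finset.sum_Icc_succ_top (by omega : lo ≤ m + 1)]
  congr 1
  rw [show m = m - 1 + 1 from by omega, Finset.sum_Icc_succ_top (by omega : lo ≤ m - 1 + 1)]
  congr 2 <;> omega

lemma trun_pos {w : List ℕ} (hcat : IsCatalan w) (hw : w ≠ []) : 1 ≤ trun w := by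
  rw [trun_eq_card hcat hw]
  have := runLow_le_mlast hw
  omega

lemma lastStep_ne_zero {w : List ℕ} (h : 2 ≤ w.length) : lastStep w ≠ 0 := by
  unfold lastStep
  rw [if_neg (by omega)]
  split_ifs <;> omega

lemma ext_bundle {n : ℕ} (hn : 1 ≤ n) {w : List ℕ} (hw : w ∈ FlatCat n) :
    w ≠ [] ∧ IsCatalan w ∧ 1 ≤ mlast w ∧ runLow w ≤ mlast w ∧ 1 ≤ trun w ∧
      (Finset.Icc (runLow w) (mlast w - 1)).card = trun w - 1 ∧
      lastStep (w ++ [mlast w + 1]) = 1 ∧ lastStep (w ++ [mlast w]) = 2 ∧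
      (∀ a < mlast w, lastStep (w ++ [a]) = 3) := by
  obtain ⟨hlen, hcat, hflat⟩ := hw
  have hwne : w ≠ [] := hcat.1
  have hlpos : 0 < w.length := List.length_pos_iff.2 hwne
  have hm1 : 1 ≤ mlast w := by
    unfold mlast
    exact cat_pos hcat (by omega)
  have hlom : runLow w ≤ mlast w := runLow_le_mlast hwne
  have htp : 1 ≤ trun w := trun_pos hcat hwne
  refine ⟨hwne, hcat, hm1, hlom, htp, ?_, ?_, ?_, ?_⟩
  · rw [Nat.card_Icc, trun_eq_card hcat hwne]
    omega
  · rw [lastStep_append hwne, if_pos (by omega)]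
  · rw [lastStep_append hwne, if_neg (by omega), if_pos rfl]
  · intro a ha
    rw [lastStep_append hwne, if_neg (by omega), if_neg (by omega)]

noncomputable def coefW (p q r : ℚ) (s n : ℕ) : ℚ :=
  ∑ w ∈ (FCfin n).filter (fun w => lastStep w = s), wt p q r w

noncomputable def coefA (p q r : ℚ) (s n : ℕ) : ℚ :=
  ∑ w ∈ (FCfin n).filter (fun w => lastStep w = s), wt p q r w * ((trun w - 1 : ℕ) : ℚ)

noncomputable def coefB (p q r y : ℚ) (s n : ℕ) : ℚ :=
  ∑ w ∈ (FCfin n).filter (fun w => lastStep w = s), wt p q r w * y ^ (trun w - 1)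

noncomputable def totW (p q r : ℚ) (n : ℕ) : ℚ := ∑ w ∈ FCfin n, wt p q r w
noncomputable def totA (p q r : ℚ) (n : ℕ) : ℚ :=
  ∑ w ∈ FCfin n, wt p q r w * ((trun w - 1 : ℕ) : ℚ)
noncomputable def totB (p q r y : ℚ) (n : ℕ) : ℚ :=
  ∑ w ∈ FCfin n, wt p q r w * y ^ (trun w - 1)

lemma sum_partition (F : Finset (List ℕ)) (g : List ℕ → ℚ) :
    ∑ w ∈ F, g w =
      (∑ w ∈ F.filter (fun w => lastStep w = 0), g w) +
      (∑ w ∈ F.filter (fun w => lastStep w = 1), g w) +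
      (∑ w ∈ F.filter (fun w => lastStep w = 2), g w) +
      (∑ w ∈ F.filter (fun w => lastStep w = 3), g w) := by
  rw [Finset.sum_filter, Finset.sum_filter, Finset.sum_filter, Finset.sum_filter,
    ← Finset.sum_add_distrib, ← Finset.sum_add_distrib, ← Finset.sum_add_distrib]
  apply Finset.sum_congr rfl
  intro w _
  have h := lastStep_le_three w
  interval_cases h : lastStep w <;> simp

lemma totW_eq (p q r : ℚ) (n : ℕ) :
    totW p q r n = coefW p q r 0 n + coefW p q r 1 n + coefW p q r 2 n + coefW p q r 3 n :=
  sum_partition _ _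

lemma totA_eq (p q r : ℚ) (n : ℕ) :
    totA p q r n = coefA p q r 0 n + coefA p q r 1 n + coefA p q r 2 n + coefA p q r 3 n :=
  sum_partition _ _

lemma totB_eq (p q r y : ℚ) (n : ℕ) :
    totB p q r y n = coefB p q r y 0 n + coefB p q r y 1 n + coefB p q r y 2 n +
      coefB p q r y 3 n :=
  sum_partition _ _

lemma coef_zero_state {n : ℕ} (hn : 1 ≤ n) (g : List ℕ → ℚ) :
    ∑ w ∈ (FCfin (n+1)).filter (fun w => lastStep w = 0), g w = 0 := by
  rw [Finset.sum_eq_zero]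
  intro w hw
  exfalso
  rw [Finset.mem_filter, mem_FCfin] at hw
  exact lastStep_ne_zero (by rw [hw.1.1]; omega) hw.2

lemma zero_state_filter (g : List ℕ → ℚ) {s : ℕ} (hs : s ≠ 0) :
    ∑ w ∈ (FCfin 1).filter (fun w => lastStep w = s), g w = 0 := by
  rw [FCfin_one, Finset.sum_eq_zero]
  intro w hw
  rw [Finset.mem_filter, Finset.mem_singleton] at hw
  exfalso
  obtain ⟨rfl, h2⟩ := hw
  have : lastStep [1] = 0 := by unfold lastStep; rw [if_pos (by simp)]
  omega

lemma coefW_rec1 (p q r : ℚ) {n : ℕ} (hn : 1 ≤ n) :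
    coefW p q r 1 (n + 1) = totW p q r n := by
  unfold coefW totW
  rw [Finset.sum_filter, sum_FCfin_succ hn]
  apply Finset.sum_congr rfl
  intro w hw
  obtain ⟨hwne, hcat, hm1, hlom, htp, hcard, hls1, hls2, hls3⟩ :=
    ext_bundle hn (mem_FCfin.1 hw)
  rw [sum_Icc_split hlom hm1]
  have hz : (∑ a ∈ Finset.Icc (runLow w) (mlast w - 1),
      if lastStep (w ++ [a]) = 1 then wt p q r (w ++ [a]) else 0) = 0 := by
    apply Finset.sum_eq_zero
    intro a ha
    rw [Finset.mem_Icc] at ha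
    rw [if_neg (by rw [hls3 a (by omega)]; omega)]
  rw [hz, if_neg (by rw [hls2]; omega), if_pos hls1, wt_append_up hwne]
  ring

lemma coefW_rec2 (p q r : ℚ) {n : ℕ} (hn : 1 ≤ n) :
    coefW p q r 2 (n + 1) = coefW p q r 0 n + p * coefW p q r 1 n +
      r * coefW p q r 2 n + q * coefW p q r 3 n := by
  have step1 : coefW p q r 2 (n + 1) =
      ∑ w ∈ FCfin n, cfac p q r (lastStep w) * wt p q r w := by
    unfold coefW
    rw [Finset.sum_filter, sum_FCfin_succ hn]
    apply Finset.sum_congr rfl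
    intro w hw
    obtain ⟨hwne, hcat, hm1, hlom, htp, hcard, hls1, hls2, hls3⟩ :=
      ext_bundle hn (mem_FCfin.1 hw)
    rw [sum_Icc_split hlom hm1]
    have hz : (∑ a ∈ Finset.Icc (runLow w) (mlast w - 1),
        if lastStep (w ++ [a]) = 2 then wt p q r (w ++ [a]) else 0) = 0 := by
      apply Finset.sum_eq_zero
      intro a ha
      rw [Finset.mem_Icc] at ha
      rw [if_neg (by rw [hls3 a (by omega)]; omega)]
    rw [hz, if_pos hls2, if_neg (by rw [hls1]; omega), wt_append_flat hwne]
    ring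
  rw [step1, sum_partition (FCfin n) (fun w => cfac p q r (lastStep w) * wt p q r w)]
  unfold coefW
  congr 1
  · congr 1
    · congr 1
      · apply Finset.sum_congr rfl
        intro w hw
        rw [(Finset.mem_filter.1 hw).2]
        simp [cfac]
      · rw [Finset.mul_sum]
        apply Finset.sum_congr rfl
        intro w hw
        rw [(Finset.mem_filter.1 hw).2]
        simp [cfac]
    · rw [Finset.mul_sum]
      apply Finset.sum_congr rfl
      intro w hw
      rw [(Finset.mem_filter.1 hw).2]
      simp [cfac]
  · rw [Finset.mul_sum]
    apply Finset.sum_congr rfl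
    intro w hw
    rw [(Finset.mem_filter.1 hw).2]
    simp [cfac]

lemma coefW_rec3 (p q r : ℚ) {n : ℕ} (hn : 1 ≤ n) :
    coefW p q r 3 (n + 1) = totA p q r n := by
  unfold coefW totA
  rw [Finset.sum_filter, sum_FCfin_succ hn]
  apply Finset.sum_congr rfl
  intro w hw
  obtain ⟨hwne, hcat, hm1, hlom, htp, hcard, hls1, hls2, hls3⟩ :=
    ext_bundle hn (mem_FCfin.1 hw)
  rw [sum_Icc_split hlom hm1]
  have hz : (∑ a ∈ Finset.Icc (runLow w) (mlast w - 1),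
      if lastStep (w ++ [a]) = 3 then wt p q r (w ++ [a]) else 0) =
      wt p q r w * ((trun w - 1 : ℕ) : ℚ) := by
    rw [Finset.sum_congr rfl (fun a ha => by
      rw [Finset.mem_Icc] at ha
      rw [if_pos (hls3 a (by omega)), wt_append_lt hwne (by omega)] :
        ∀ a ∈ Finset.Icc (runLow w) (mlast w - 1),
          (if lastStep (w ++ [a]) = 3 then wt p q r (w ++ [a]) else 0) = wt p q r w)]
    rw [Finset.sum_const, hcard, nsmul_eq_mul, mul_comm]
  rw [hz, if_neg (by rw [hls2]; omega), if_neg (by rw [hls1]; omega)]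
  ring

lemma coefA_rec1 (p q r : ℚ) {n : ℕ} (hn : 1 ≤ n) :
    coefA p q r 1 (n + 1) = totA p q r n + totW p q r n := by
  have step1 : coefA p q r 1 (n + 1) = ∑ w ∈ FCfin n, wt p q r w * ((trun w : ℕ) : ℚ) := by
    unfold coefA
    rw [Finset.sum_filter, sum_FCfin_succ hn]
    apply Finset.sum_congr rfl
    intro w hw
    obtain ⟨hwne, hcat, hm1, hlom, htp, hcard, hls1, hls2, hls3⟩ :=
      ext_bundle hn (mem_FCfin.1 hw)
    rw [sum_Icc_split hlom hm1]
    have hz : (∑ a ∈ Finset.Icc (runLow w) (mlast w - 1),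
        if lastStep (w ++ [a]) = 1 then wt p q r (w ++ [a]) * ((trun (w ++ [a]) - 1 : ℕ) : ℚ)
        else 0) = 0 := by
      apply Finset.sum_eq_zero
      intro a ha
      rw [Finset.mem_Icc] at ha
      rw [if_neg (by rw [hls3 a (by omega)]; omega)]
    rw [hz, if_neg (by rw [hls2]; omega), if_pos hls1, wt_append_up hwne,
      trun_append_up hcat hwne, Nat.add_sub_cancel]
    ring
  rw [step1]
  unfold totA totW
  rw [← Finset.sum_add_distrib]
  apply Finset.sum_congr rfl
  intro w hw
  have hfc := mem_FCfin.1 hw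
  have htp : 1 ≤ trun w := trun_pos hfc.2.1 hfc.2.1.1
  have hcast : ((trun w : ℕ) : ℚ) = ((trun w - 1 : ℕ) : ℚ) + 1 := by
    have h : trun w - 1 + 1 = trun w := by omega
    calc ((trun w : ℕ) : ℚ) = ((trun w - 1 + 1 : ℕ) : ℚ) := by rw [h]
    _ = ((trun w - 1 : ℕ) : ℚ) + 1 := by push_cast; ring
  rw [hcast]
  ring

lemma coefA_rec2 (p q r : ℚ) {n : ℕ} (hn : 1 ≤ n) :
    coefA p q r 2 (n + 1) = coefA p q r 0 n + p * coefA p q r 1 n +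
      r * coefA p q r 2 n + q * coefA p q r 3 n := by
  have step1 : coefA p q r 2 (n + 1) =
      ∑ w ∈ FCfin n, cfac p q r (lastStep w) * (wt p q r w * ((trun w - 1 : ℕ) : ℚ)) := by
    unfold coefA
    rw [Finset.sum_filter, sum_FCfin_succ hn]
    apply Finset.sum_congr rfl
    intro w hw
    obtain ⟨hwne, hcat, hm1, hlom, htp, hcard, hls1, hls2, hls3⟩ :=
      ext_bundle hn (mem_FCfin.1 hw)
    rw [sum_Icc_split hlom hm1]
    have hz : (∑ a ∈ Finset.Icc (runLow w) (mlast w - 1),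
        if lastStep (w ++ [a]) = 2 then wt p q r (w ++ [a]) * ((trun (w ++ [a]) - 1 : ℕ) : ℚ)
        else 0) = 0 := by
      apply Finset.sum_eq_zero
      intro a ha
      rw [Finset.mem_Icc] at ha
      rw [if_neg (by rw [hls3 a (by omega)]; omega)]
    rw [hz, if_pos hls2, if_neg (by rw [hls1]; omega), wt_append_flat hwne,
      trun_append_flat hcat hwne]
    ring
  rw [step1, sum_partition (FCfin n)
    (fun w => cfac p q r (lastStep w) * (wt p q r w * ((trun w - 1 : ℕ) : ℚ)))]
  unfold coefA
  congr 1
  · congr 1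
    · congr 1
      · apply Finset.sum_congr rfl
        intro w hw
        rw [(Finset.mem_filter.1 hw).2]
        simp [cfac]
      · rw [Finset.mul_sum]
        apply Finset.sum_congr rfl
        intro w hw
        rw [(Finset.mem_filter.1 hw).2]
        simp [cfac]
    · rw [Finset.mul_sum]
      apply Finset.sum_congr rfl
      intro w hw
      rw [(Finset.mem_filter.1 hw).2]
      simp [cfac]
  · rw [Finset.mul_sum]
    apply Finset.sum_congr rfl
    intro w hw
    rw [(Finset.mem_filter.1 hw).2]
    simp [cfac]

lemma coefA_rec3 (p q r : ℚ) {n : ℕ} (hn : 1 ≤ n) :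
    coefA p q r 3 (n + 1) = 0 := by
  unfold coefA
  rw [Finset.sum_filter, sum_FCfin_succ hn]
  apply Finset.sum_eq_zero
  intro w hw
  obtain ⟨hwne, hcat, hm1, hlom, htp, hcard, hls1, hls2, hls3⟩ :=
    ext_bundle hn (mem_FCfin.1 hw)
  rw [sum_Icc_split hlom hm1]
  have hz : (∑ a ∈ Finset.Icc (runLow w) (mlast w - 1),
      if lastStep (w ++ [a]) = 3 then wt p q r (w ++ [a]) * ((trun (w ++ [a]) - 1 : ℕ) : ℚ)
      else 0) = 0 := by
    apply Finset.sum_eq_zero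
    intro a ha
    rw [Finset.mem_Icc] at ha
    rw [if_pos (hls3 a (by omega)), trun_append_lt hwne (by omega)]
    norm_num
  rw [hz, if_neg (by rw [hls2]; omega), if_neg (by rw [hls1]; omega)]
  ring

lemma coefB_rec1 (p q r y : ℚ) {n : ℕ} (hn : 1 ≤ n) :
    coefB p q r y 1 (n + 1) = y * totB p q r y n := by
  unfold coefB totB
  rw [Finset.sum_filter, sum_FCfin_succ hn, Finset.mul_sum]
  apply Finset.sum_congr rfl
  intro w hw
  obtain ⟨hwne, hcat, hm1, hlom, htp, hcard, hls1, hls2, hls3⟩ :=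
    ext_bundle hn (mem_FCfin.1 hw)
  rw [sum_Icc_split hlom hm1]
  have hz : (∑ a ∈ Finset.Icc (runLow w) (mlast w - 1),
      if lastStep (w ++ [a]) = 1 then wt p q r (w ++ [a]) * y ^ (trun (w ++ [a]) - 1)
      else 0) = 0 := by
    apply Finset.sum_eq_zero
    intro a ha
    rw [Finset.mem_Icc] at ha
    rw [if_neg (by rw [hls3 a (by omega)]; omega)]
  have hy : y ^ trun w = y * y ^ (trun w - 1) := by
    conv_lhs => rw [show trun w = (trun w - 1) + 1 from by omega]
    rw [pow_succ]
    ring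
  rw [hz, if_neg (by rw [hls2]; omega), if_pos hls1, wt_append_up hwne,
    trun_append_up hcat hwne, Nat.add_sub_cancel, hy]
  ring

lemma coefB_rec2 (p q r y : ℚ) {n : ℕ} (hn : 1 ≤ n) :
    coefB p q r y 2 (n + 1) = coefB p q r y 0 n + p * coefB p q r y 1 n +
      r * coefB p q r y 2 n + q * coefB p q r y 3 n := by
  have step1 : coefB p q r y 2 (n + 1) =
      ∑ w ∈ FCfin n, cfac p q r (lastStep w) * (wt p q r w * y ^ (trun w - 1)) := by
    unfold coefB
    rw [Finset.sum_filter, sum_FCfin_succ hn]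
    apply Finset.sum_congr rfl
    intro w hw
    obtain ⟨hwne, hcat, hm1, hlom, htp, hcard, hls1, hls2, hls3⟩ :=
      ext_bundle hn (mem_FCfin.1 hw)
    rw [sum_Icc_split hlom hm1]
    have hz : (∑ a ∈ Finset.Icc (runLow w) (mlast w - 1),
        if lastStep (w ++ [a]) = 2 then wt p q r (w ++ [a]) * y ^ (trun (w ++ [a]) - 1)
        else 0) = 0 := by
      apply Finset.sum_eq_zero
      intro a ha
      rw [Finset.mem_Icc] at ha
      rw [if_neg (by rw [hls3 a (by omega)]; omega)]
    rw [hz, if_pos hls2, if_neg (by rw [hls1]; omega), wt_append_flat hwne,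
      trun_append_flat hcat hwne]
    ring
  rw [step1, sum_partition (FCfin n)
    (fun w => cfac p q r (lastStep w) * (wt p q r w * y ^ (trun w - 1)))]
  unfold coefB
  congr 1
  · congr 1
    · congr 1
      · apply Finset.sum_congr rfl
        intro w hw
        rw [(Finset.mem_filter.1 hw).2]
        simp [cfac]
      · rw [Finset.mul_sum]
        apply Finset.sum_congr rfl
        intro w hw
        rw [(Finset.mem_filter.1 hw).2]
        simp [cfac]
    · rw [Finset.mul_sum]
      apply Finset.sum_congr rfl
      intro w hw
      rw [(Finset.mem_filter.1 hw).2]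
      simp [cfac]
  · rw [Finset.mul_sum]
    apply Finset.sum_congr rfl
    intro w hw
    rw [(Finset.mem_filter.1 hw).2]
    simp [cfac]

lemma coefB_rec3 (p q r y : ℚ) {n : ℕ} (hn : 1 ≤ n) :
    coefB p q r y 3 (n + 1) = totA p q r n := by
  unfold coefB totA
  rw [Finset.sum_filter, sum_FCfin_succ hn]
  apply Finset.sum_congr rfl
  intro w hw
  obtain ⟨hwne, hcat, hm1, hlom, htp, hcard, hls1, hls2, hls3⟩ :=
    ext_bundle hn (mem_FCfin.1 hw)
  rw [sum_Icc_split hlom hm1]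
  have hz : (∑ a ∈ Finset.Icc (runLow w) (mlast w - 1),
      if lastStep (w ++ [a]) = 3 then wt p q r (w ++ [a]) * y ^ (trun (w ++ [a]) - 1)
      else 0) = wt p q r w * ((trun w - 1 : ℕ) : ℚ) := by
    rw [Finset.sum_congr rfl (fun a ha => by
      rw [Finset.mem_Icc] at ha
      rw [if_pos (hls3 a (by omega)), wt_append_lt hwne (by omega),
        trun_append_lt hwne (by omega)]
      norm_num :
        ∀ a ∈ Finset.Icc (runLow w) (mlast w - 1),
          (if lastStep (w ++ [a]) = 3 then wt p q r (w ++ [a]) * y ^ (trun (w ++ [a]) - 1)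
            else 0) = wt p q r w)]
    rw [Finset.sum_const, hcard, nsmul_eq_mul, mul_comm]
  rw [hz, if_neg (by rw [hls2]; omega), if_neg (by rw [hls1]; omega)]
  ring

lemma coef_base_W (p q r : ℚ) :
    coefW p q r 0 1 = 1 ∧ coefW p q r 1 1 = 0 ∧ coefW p q r 2 1 = 0 ∧ coefW p q r 3 1 = 0 := by
  refine ⟨?_, zero_state_filter _ (by omega), zero_state_filter _ (by omega),
    zero_state_filter _ (by omega)⟩
  unfold coefW
  rw [FCfin_one]
  rw [Finset.filter_singleton, if_pos (by unfold lastStep; rw [if_pos (by simp)])]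
  rw [Finset.sum_singleton, wt_short (by simp)]

lemma trun_one : trun [1] = 1 := by
  have h0 : runIdx [1] = 0 := by
    have := runIdx_le [1]
    simp only [List.length_singleton] at this
    omega
  rw [trun_def, h0]
  rfl

lemma coef_base_A (p q r : ℚ) :
    coefA p q r 0 1 = 0 ∧ coefA p q r 1 1 = 0 ∧ coefA p q r 2 1 = 0 ∧ coefA p q r 3 1 = 0 := by
  refine ⟨?_, zero_state_filter _ (by omega), zero_state_filter _ (by omega),
    zero_state_filter _ (by omega)⟩
  unfold coefA
  apply Finset.sum_eq_zero
  intro w hw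
  rw [Finset.mem_filter, FCfin_one, Finset.mem_singleton] at hw
  rw [hw.1, trun_one]
  norm_num

lemma coef_base_B (p q r y : ℚ) :
    coefB p q r y 0 1 = 1 ∧ coefB p q r y 1 1 = 0 ∧ coefB p q r y 2 1 = 0 ∧
      coefB p q r y 3 1 = 0 := by
  refine ⟨?_, zero_state_filter _ (by omega), zero_state_filter _ (by omega),
    zero_state_filter _ (by omega)⟩
  unfold coefB
  rw [FCfin_one]
  rw [Finset.filter_singleton, if_pos (by unfold lastStep; rw [if_pos (by simp)])]
  rw [Finset.sum_singleton, wt_short (by simp), trun_one]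
  norm_num

lemma coef_zero_n (p q r y : ℚ) (s : ℕ) :
    coefW p q r s 0 = 0 ∧ coefA p q r s 0 = 0 ∧ coefB p q r y s 0 = 0 := by
  unfold coefW coefA coefB
  rw [FCfin_zero]
  simp

lemma coefW0 (p q r : ℚ) {n : ℕ} (hn : 1 ≤ n) : coefW p q r 0 (n + 1) = 0 :=
  coef_zero_state hn _

lemma coefA0 (p q r : ℚ) {n : ℕ} (hn : 1 ≤ n) : coefA p q r 0 (n + 1) = 0 :=
  coef_zero_state hn _

lemma coefB0 (p q r y : ℚ) {n : ℕ} (hn : 1 ≤ n) : coefB p q r y 0 (n + 1) = 0 :=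
  coef_zero_state hn _

open PowerSeries

lemma mk_eq_X_mul {f g : ℕ → ℚ} (h0 : f 0 = 0) (h : ∀ n, f (n + 1) = g n) :
    PowerSeries.mk f = PowerSeries.X * PowerSeries.mk g := by
  ext n
  cases n with
  | zero =>
    simp only [PowerSeries.coeff_mk, h0, PowerSeries.coeff_zero_eq_constantCoeff, map_mul,
      PowerSeries.constantCoeff_X, zero_mul]
  | succ k =>
    rw [PowerSeries.coeff_succ_X_mul, PowerSeries.coeff_mk, PowerSeries.coeff_mk, h]

lemma totW_zero (p q r : ℚ) : totW p q r 0 = 0 := by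
  unfold totW; rw [FCfin_zero]; simp

lemma totA_zero (p q r : ℚ) : totA p q r 0 = 0 := by
  unfold totA; rw [FCfin_zero]; simp

lemma totB_zero (p q r y : ℚ) : totB p q r y 0 = 0 := by
  unfold totB; rw [FCfin_zero]; simp

section Series

variable (p q r y : ℚ)

noncomputable def serW (s : ℕ) : PowerSeries ℚ := PowerSeries.mk (coefW p q r s)
noncomputable def serA (s : ℕ) : PowerSeries ℚ := PowerSeries.mk (coefA p q r s)
noncomputable def serB (s : ℕ) : PowerSeries ℚ := PowerSeries.mk (coefB p q r y s)
noncomputable def serTW : PowerSeries ℚ := PowerSeries.mk (totW p q r)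
noncomputable def serTA : PowerSeries ℚ := PowerSeries.mk (totA p q r)
noncomputable def serTB : PowerSeries ℚ := PowerSeries.mk (totB p q r y)

lemma serW_eq : serTW p q r = serW p q r 0 + serW p q r 1 + serW p q r 2 + serW p q r 3 := by
  unfold serTW serW
  ext n
  simp only [map_add, PowerSeries.coeff_mk]
  exact totW_eq p q r n

lemma serA_eq : serTA p q r = serA p q r 0 + serA p q r 1 + serA p q r 2 + serA p q r 3 := by
  unfold serTA serA
  ext n
  simp only [map_add, PowerSeries.coeff_mk]
  exact totA_eq p q r n

lemma serB_eq : serTB p q r y = serB p q r y 0 + serB p q r y 1 + serB p q r y 2 +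
    serB p q r y 3 := by
  unfold serTB serB
  ext n
  simp only [map_add, PowerSeries.coeff_mk]
  exact totB_eq p q r y n

lemma rel_W0 : serW p q r 0 = PowerSeries.X := by
  unfold serW
  ext n
  rw [PowerSeries.coeff_mk, PowerSeries.coeff_X]
  match n with
  | 0 => rw [if_neg (by omega)]; exact (coef_zero_n p q r 0 0).1
  | 1 => rw [if_pos rfl]; exact (coef_base_W p q r).1
  | (k+2) => rw [if_neg (by omega)]; exact coefW0 p q r (by omega)

lemma rel_B0 : serB p q r y 0 = PowerSeries.X := by
  unfold serB
  ext n
  rw [PowerSeries.coeff_mk, PowerSeries.coeff_X]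
  match n with
  | 0 => rw [if_neg (by omega)]; exact (coef_zero_n p q r y 0).2.2
  | 1 => rw [if_pos rfl]; exact (coef_base_B p q r y).1
  | (k+2) => rw [if_neg (by omega)]; exact coefB0 p q r y (by omega)

lemma rel_A0 : serA p q r 0 = 0 := by
  unfold serA
  ext n
  rw [PowerSeries.coeff_mk, map_zero]
  match n with
  | 0 => exact (coef_zero_n p q r 0 0).2.1
  | 1 => exact (coef_base_A p q r).1
  | (k+2) => exact coefA0 p q r (by omega)

lemma rel_A3 : serA p q r 3 = 0 := by
  unfold serA
  ext n
  rw [PowerSeries.coeff_mk, map_zero]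
  match n with
  | 0 => exact (coef_zero_n p q r 0 3).2.1
  | 1 => exact (coef_base_A p q r).2.2.2
  | (k+2) => exact coefA_rec3 p q r (by omega)

lemma rel_W1 : serW p q r 1 = PowerSeries.X * serTW p q r := by
  unfold serW serTW
  apply mk_eq_X_mul (coef_zero_n p q r 0 1).1
  intro n
  match n with
  | 0 => rw [(coef_base_W p q r).2.1, totW_zero]
  | (k+1) => exact coefW_rec1 p q r (by omega)

lemma rel_W3 : serW p q r 3 = PowerSeries.X * serTA p q r := by
  unfold serW serTA
  apply mk_eq_X_mul (coef_zero_n p q r 0 3).1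
  intro n
  match n with
  | 0 => rw [(coef_base_W p q r).2.2.2, totA_zero]
  | (k+1) => exact coefW_rec3 p q r (by omega)

lemma rel_B3 : serB p q r y 3 = PowerSeries.X * serTA p q r := by
  unfold serB serTA
  apply mk_eq_X_mul (coef_zero_n p q r y 3).2.2
  intro n
  match n with
  | 0 => rw [(coef_base_B p q r y).2.2.2, totA_zero]
  | (k+1) => exact coefB_rec3 p q r y (by omega)

lemma rel_A1 : serA p q r 1 = PowerSeries.X * (serTA p q r + serTW p q r) := by
  have hg : serTA p q r + serTW p q r = PowerSeries.mk (fun n => totA p q r n + totW p q r n) := by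
    unfold serTA serTW
    ext n
    simp only [map_add, PowerSeries.coeff_mk]
  rw [hg]
  unfold serA
  apply mk_eq_X_mul (coef_zero_n p q r 0 1).2.1
  intro n
  match n with
  | 0 => rw [(coef_base_A p q r).2.1, totA_zero, totW_zero]; norm_num
  | (k+1) => exact coefA_rec1 p q r (by omega)

lemma rel_B1 : serB p q r y 1 = PowerSeries.X * (PowerSeries.C y * serTB p q r y) := by
  have hg : PowerSeries.C y * serTB p q r y =
      PowerSeries.mk (fun n => y * totB p q r y n) := by
    unfold serTB
    ext n
    simp only [PowerSeries.coeff_C_mul, PowerSeries.coeff_mk]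
  rw [hg]
  unfold serB
  apply mk_eq_X_mul (coef_zero_n p q r y 1).2.2
  intro n
  match n with
  | 0 => rw [(coef_base_B p q r y).2.1, totB_zero]; norm_num
  | (k+1) => exact coefB_rec1 p q r y (by omega)

lemma rel_W2 : serW p q r 2 = PowerSeries.X * (serW p q r 0 + PowerSeries.C p * serW p q r 1 +
    PowerSeries.C r * serW p q r 2 + PowerSeries.C q * serW p q r 3) := by
  have hg : serW p q r 0 + PowerSeries.C p * serW p q r 1 +
      PowerSeries.C r * serW p q r 2 + PowerSeries.C q * serW p q r 3 =
      PowerSeries.mk (fun n => coefW p q r 0 n + p * coefW p q r 1 n + r * coefW p q r 2 n +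
        q * coefW p q r 3 n) := by
    unfold serW
    ext n
    simp only [map_add, PowerSeries.coeff_C_mul, PowerSeries.coeff_mk]
  rw [hg]
  unfold serW
  apply mk_eq_X_mul (coef_zero_n p q r 0 2).1
  intro n
  match n with
  | 0 =>
    rw [(coef_base_W p q r).2.2.1, (coef_zero_n p q r 0 0).1, (coef_zero_n p q r 0 1).1,
      (coef_zero_n p q r 0 2).1, (coef_zero_n p q r 0 3).1]
    ring
  | (k+1) => exact coefW_rec2 p q r (by omega)

lemma rel_A2 : serA p q r 2 = PowerSeries.X * (serA p q r 0 + PowerSeries.C p * serA p q r 1 +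
    PowerSeries.C r * serA p q r 2 + PowerSeries.C q * serA p q r 3) := by
  have hg : serA p q r 0 + PowerSeries.C p * serA p q r 1 +
      PowerSeries.C r * serA p q r 2 + PowerSeries.C q * serA p q r 3 =
      PowerSeries.mk (fun n => coefA p q r 0 n + p * coefA p q r 1 n + r * coefA p q r 2 n +
        q * coefA p q r 3 n) := by
    unfold serA
    ext n
    simp only [map_add, PowerSeries.coeff_C_mul, PowerSeries.coeff_mk]
  rw [hg]
  unfold serA
  apply mk_eq_X_mul (coef_zero_n p q r 0 2).2.1
  intro n
  match n with
  | 0 =>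
    rw [(coef_base_A p q r).2.2.1, (coef_zero_n p q r 0 0).2.1, (coef_zero_n p q r 0 1).2.1,
      (coef_zero_n p q r 0 2).2.1, (coef_zero_n p q r 0 3).2.1]
    ring
  | (k+1) => exact coefA_rec2 p q r (by omega)

lemma rel_B2 : serB p q r y 2 = PowerSeries.X * (serB p q r y 0 +
    PowerSeries.C p * serB p q r y 1 + PowerSeries.C r * serB p q r y 2 +
    PowerSeries.C q * serB p q r y 3) := by
  have hg : serB p q r y 0 + PowerSeries.C p * serB p q r y 1 +
      PowerSeries.C r * serB p q r y 2 + PowerSeries.C q * serB p q r y 3 =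
      PowerSeries.mk (fun n => coefB p q r y 0 n + p * coefB p q r y 1 n +
        r * coefB p q r y 2 n + q * coefB p q r y 3 n) := by
    unfold serB
    ext n
    simp only [map_add, PowerSeries.coeff_C_mul, PowerSeries.coeff_mk]
  rw [hg]
  unfold serB
  apply mk_eq_X_mul (coef_zero_n p q r y 2).2.2
  intro n
  match n with
  | 0 =>
    rw [(coef_base_B p q r y).2.2.1, (coef_zero_n p q r y 0).2.2, (coef_zero_n p q r y 1).2.2,
      (coef_zero_n p q r y 2).2.2, (coef_zero_n p q r y 3).2.2]
    ring
  | (k+1) => exact coefB_rec2 p q r y (by omega)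

end Series
end FCAux



/-- The generating function for flattened Catalan words jointly by length,
`#122`, `#211`, `#111` and `trun − 1` satisfies
`(1 − (r+y)x − (p−r)x²y)·((1 − (1+r)x − (p−r)x²)² − x²(1+(p−r)x)(1+(q−r)x))·B
  = x(1 + (1−r)x)(1 − (1+r)x − (p−r)x²)²`. -/
theorem genfun_122_211_111 (p q r y : ℚ) (B : PowerSeries ℚ)
    (hB : ∀ n : ℕ, PowerSeries.coeff n B =
      if n = 0 then 0 else
        ∑ᶠ w ∈ FlatCat n,
          p ^ numOcc [1, 2, 2] w * q ^ numOcc [2, 1, 1] w *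
            r ^ numOcc [1, 1, 1] w * y ^ (trun w - 1)) :
    (1 - PowerSeries.C (r + y) * PowerSeries.X
        - PowerSeries.C ((p - r) * y) * PowerSeries.X ^ 2) *
      ((1 - PowerSeries.C (1 + r) * PowerSeries.X
          - PowerSeries.C (p - r) * PowerSeries.X ^ 2) ^ 2
        - PowerSeries.X ^ 2 * (1 + PowerSeries.C (p - r) * PowerSeries.X) *
            (1 + PowerSeries.C (q - r) * PowerSeries.X)) * B =
    PowerSeries.X * (1 + PowerSeries.C (1 - r) * PowerSeries.X) *
      (1 - PowerSeries.C (1 + r) * PowerSeries.X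
        - PowerSeries.C (p - r) * PowerSeries.X ^ 2) ^ 2 := by
  classical
  have hBS : B = FCAux.serTB p q r y := by
    ext n
    rw [hB n]
    unfold FCAux.serTB
    rw [PowerSeries.coeff_mk]
    cases n with
    | zero => rw [if_pos rfl, FCAux.totB_zero]
    | succ k =>
      rw [if_neg (by omega)]
      unfold FCAux.totB
      rw [show FlatCat (k+1) = ↑(FCAux.FCfin (k+1)) from
        ((FCAux.flatcat_finite (k+1)).coe_toFinset).symm, finsum_mem_coe_finset]
      apply Finset.sum_congr rfl
      intro w _
      unfold FCAux.wt
      ring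
  have rW0 := FCAux.rel_W0 p q r
  have rW1 := FCAux.rel_W1 p q r
  have rW2 := FCAux.rel_W2 p q r
  have rW3 := FCAux.rel_W3 p q r
  have rA0 := FCAux.rel_A0 p q r
  have rA1 := FCAux.rel_A1 p q r
  have rA2 := FCAux.rel_A2 p q r
  have rA3 := FCAux.rel_A3 p q r
  have rB0 := FCAux.rel_B0 p q r y
  have rB1 := FCAux.rel_B1 p q r y
  have rB2 := FCAux.rel_B2 p q r y
  have rB3 := FCAux.rel_B3 p q r y
  have hSW := FCAux.serW_eq p q r
  have hSA := FCAux.serA_eq p q r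
  have hSB := FCAux.serB_eq p q r y
  rw [← hBS] at rB1 hSB
  have h1 : B * (1 - (PowerSeries.C r + PowerSeries.C y) * PowerSeries.X
      - (PowerSeries.C p - PowerSeries.C r) * PowerSeries.C y * PowerSeries.X ^ 2) =
      PowerSeries.X * (1 + (1 - PowerSeries.C r) * PowerSeries.X)
      + PowerSeries.X * (1 + (PowerSeries.C q - PowerSeries.C r) * PowerSeries.X)
          * FCAux.serTA p q r := by
    linear_combination (1 + (1 - PowerSeries.C r) * PowerSeries.X) * rB0
      + (1 + (PowerSeries.C p - PowerSeries.C r) * PowerSeries.X) * rB1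
      + rB2
      + (1 + (PowerSeries.C q - PowerSeries.C r) * PowerSeries.X) * rB3
      + (1 - PowerSeries.C r * PowerSeries.X) * hSB
  have h3 : FCAux.serTW p q r * (1 - (1 + PowerSeries.C r) * PowerSeries.X
      - (PowerSeries.C p - PowerSeries.C r) * PowerSeries.X ^ 2) =
      PowerSeries.X * (1 + (1 - PowerSeries.C r) * PowerSeries.X)
      + PowerSeries.X * (1 + (PowerSeries.C q - PowerSeries.C r) * PowerSeries.X)
          * FCAux.serTA p q r := by
    linear_combination (1 + (1 - PowerSeries.C r) * PowerSeries.X) * rW0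
      + (1 + (PowerSeries.C p - PowerSeries.C r) * PowerSeries.X) * rW1
      + rW2
      + (1 + (PowerSeries.C q - PowerSeries.C r) * PowerSeries.X) * rW3
      + (1 - PowerSeries.C r * PowerSeries.X) * hSW
  have h2 : FCAux.serTA p q r * (1 - (1 + PowerSeries.C r) * PowerSeries.X
      - (PowerSeries.C p - PowerSeries.C r) * PowerSeries.X ^ 2) =
      PowerSeries.X * (1 + (PowerSeries.C p - PowerSeries.C r) * PowerSeries.X)
          * FCAux.serTW p q r := by
    linear_combination (1 + (1 - PowerSeries.C r) * PowerSeries.X) * rA0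
      + (1 + (PowerSeries.C p - PowerSeries.C r) * PowerSeries.X) * rA1
      + rA2
      + (1 + (PowerSeries.C q - PowerSeries.C r) * PowerSeries.X) * rA3
      + (1 - PowerSeries.C r * PowerSeries.X) * hSA
  simp only [map_add, map_sub, map_mul, map_one] at *
  linear_combination
    (((1 - (1 + PowerSeries.C r) * PowerSeries.X
        - (PowerSeries.C p - PowerSeries.C r) * PowerSeries.X ^ 2) ^ 2)
      - PowerSeries.X ^ 2 * (1 + (PowerSeries.C p - PowerSeries.C r) * PowerSeries.X)
          * (1 + (PowerSeries.C q - PowerSeries.C r) * PowerSeries.X)) * h1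
    + (PowerSeries.X ^ 2 * (1 + (PowerSeries.C p - PowerSeries.C r) * PowerSeries.X)
        * (1 + (PowerSeries.C q - PowerSeries.C r) * PowerSeries.X)) * h3
    + (PowerSeries.X * (1 + (PowerSeries.C q - PowerSeries.C r) * PowerSeries.X)
        * (1 - (1 + PowerSeries.C r) * PowerSeries.X
          - (PowerSeries.C p - PowerSeries.C r) * PowerSeries.X ^ 2)) * h2
end
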